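/- arXiv:0809.1266 — 4 statements merged into one kernel-verified Lean document; each statement's English description precedes it below -/
import Mathlib

section
/- Let n ≥ 1 be an integer, let x ∈ ℂ, let w ∈ ℂ with w ≠ 0, and let 0 < ε < |w|. Then (1/(2πi)) ∮_{|t|=ε} (e^{xt}/t)^n · (t − w)^{−1} dt = −w^{−n} · S_{n−1}(n w x). -/
open Complex Metric Finset

lemma circleIntegral_finset_sum {ι : Type*} (s : Finset ι) (f : ι → ℂ → ℂ) (c : ℂ) (R : ℝ)
    (h : ∀ i ∈ s, CircleIntegrable (f i) c R) :
    (∮ z in C(c, R), ∑ i ∈ s, f i z) = ∑ i ∈ s, ∮ z in C(c, R), f i z := by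
  simp only [circleIntegral, Finset.smul_sum]
  rw [intervalIntegral.integral_finset_sum]
  exact fun i hi => (h i hi).out

lemma cauchy_exp (c : ℂ) (j : ℕ) {ε : ℝ} (hε : 0 < ε) :
    (∮ z in C(0, ε), Complex.exp (c * z) * ((z : ℂ) ^ (j + 1))⁻¹) =
      (2 * (Real.pi : ℂ) * Complex.I) * (c ^ j / (Nat.factorial j : ℂ)) := by
  set g : ℂ → ℂ := fun z => Complex.exp (c * z) with hg
  have hd : DifferentiableOn ℂ g (closedBall 0 ((⟨ε, hε.le⟩ : NNReal) : ℝ)) := by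
    intro z _
    exact ((differentiable_exp.comp ((differentiable_const c).mul differentiable_id)) z).differentiableWithinAt
  have h := hd.hasFPowerSeriesOnBall (by exact_mod_cast hε)
  have h1 := h.factorial_smul 1 j
  have hit : iteratedDeriv j g 0 = c ^ j := by
    rw [hg, iteratedDeriv_cexp_const_mul]; simp
  have h2 := cauchyPowerSeries_apply g 0 ((⟨ε, hε.le⟩ : NNReal) : ℝ) j 1
  rw [← iteratedDeriv_eq_iteratedFDeriv, hit] at h1
  clear h2
  have h1 : j.factorial • ((2 * (Real.pi : ℂ) * Complex.I)⁻¹ •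
      ∮ (z : ℂ) in C(0, ε), (1 / (z - 0)) ^ j • (z - 0)⁻¹ • g z) = c ^ j := by
    rw [← cauchyPowerSeries_apply g 0 ((⟨ε, hε.le⟩ : NNReal) : ℝ) j 1]
    exact h1
  have h3 : (∮ z in C(0, ε), (1 / (z - 0)) ^ j • (z - 0)⁻¹ • g z)
      = ∮ z in C(0, ε), Complex.exp (c * z) * ((z : ℂ) ^ (j + 1))⁻¹ := by
    apply circleIntegral.integral_congr hε.le
    intro z _
    simp only [sub_zero, smul_eq_mul, hg, one_div, inv_pow, pow_succ, mul_inv]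
    ring
  rw [h3] at h1
  have hfac : ((Nat.factorial j : ℂ)) ≠ 0 := Nat.cast_ne_zero.mpr (Nat.factorial_ne_zero j)
  have h2pi : (2 * (Real.pi : ℂ) * Complex.I) ≠ 0 := by
    simp [Real.pi_ne_zero, Complex.I_ne_zero]
  rw [nsmul_eq_mul, smul_eq_mul] at h1
  field_simp at h1 ⊢
  linear_combination h1

lemma pfrac (n : ℕ) (t w : ℂ) (ht : t ≠ 0) (hw : w ≠ 0) (htw : t ≠ w) :
    (t - w)⁻¹ * (t ^ n)⁻¹ =
      (w ^ n)⁻¹ * (t - w)⁻¹ - ∑ j ∈ Finset.range n, (w ^ (n - j))⁻¹ * (t ^ (j + 1))⁻¹ := by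
  induction n with
  | zero => simp
  | succ n ih =>
    have htw' : t - w ≠ 0 := sub_ne_zero.mpr htw
    have key : (t - w)⁻¹ * (t ^ (n + 1))⁻¹
        = w⁻¹ * ((t - w)⁻¹ * (t ^ n)⁻¹) - w⁻¹ * (t ^ (n + 1))⁻¹ := by
      have sub1 : (t - w)⁻¹ - t⁻¹ = (t - (t - w)) / ((t - w) * t) := inv_sub_inv htw' ht
      have sub2 : (t - w)⁻¹ - t⁻¹ = w * ((t - w)⁻¹ * t⁻¹) := by
        rw [sub1, sub_sub_cancel, div_eq_mul_inv, mul_inv]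
      have : w⁻¹ * ((t - w)⁻¹ * (t ^ n)⁻¹) - w⁻¹ * (t ^ (n + 1))⁻¹
          = w⁻¹ * (t ^ n)⁻¹ * ((t - w)⁻¹ - t⁻¹) := by
        rw [pow_succ, mul_inv]; ring
      rw [this, sub2, pow_succ, mul_inv]
      field_simp
    rw [key, ih, Finset.sum_range_succ]
    have hsum : ∀ j ∈ Finset.range n, w⁻¹ * ((w ^ (n - j))⁻¹ * (t ^ (j + 1))⁻¹)
        = (w ^ (n + 1 - j))⁻¹ * (t ^ (j + 1))⁻¹ := by
      intro j hj
      have hjn : j ≤ n := le_of_lt (Finset.mem_range.mp hj)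
      have : n + 1 - j = (n - j) + 1 := by omega
      rw [this, pow_succ, mul_inv]
      ring
    rw [mul_sub, Finset.mul_sum, Finset.sum_congr rfl hsum]
    have : n + 1 - n = 1 := by omega
    rw [this, pow_succ, mul_inv, pow_one]
    ring

/-- For `n ≥ 1`, `x ∈ ℂ`, `w ≠ 0` and `0 < ε < |w|`,
`(1/(2πi)) ∮_{|t|=ε} (e^{xt}/t)^n (t − w)⁻¹ dt = −w^{−n} S_{n−1}(n w x)`,
where `S_{n−1}(z) = ∑_{k=0}^{n−1} z^k/k!`. -/
theorem stmt_0 (n : ℕ) (hn : 1 ≤ n) (x w : ℂ) (hw : w ≠ 0)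
    (ε : ℝ) (hε : 0 < ε) (hεw : ε < ‖w‖) :
    (1 / (2 * (Real.pi : ℂ) * Complex.I)) *
        (∮ t in C(0, ε), (Complex.exp (x * t) / t) ^ n * (t - w)⁻¹) =
      -(w ^ (-(n : ℤ)) *
        ∑ k ∈ Finset.range n, ((n : ℂ) * w * x) ^ k / (Nat.factorial k : ℂ)) := by
  set a : ℂ := (n : ℂ) * x with ha
  -- step 1: rewrite integrand on the sphere
  have hEq : Set.EqOn (fun t : ℂ => (Complex.exp (x * t) / t) ^ n * (t - w)⁻¹)
      (fun t : ℂ => (w ^ n)⁻¹ * (Complex.exp (a * t) * (t - w)⁻¹)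
        - ∑ j ∈ Finset.range n, (w ^ (n - j))⁻¹ * (Complex.exp (a * t) * ((t : ℂ) ^ (j + 1))⁻¹))
      (sphere (0 : ℂ) ε) := by
    intro t htmem
    have habs : ‖t‖ = ε := by
      simpa [Complex.dist_eq] using mem_sphere_iff_norm.mp htmem
    have ht : t ≠ 0 := by
      intro h; rw [h] at habs; simp at habs; exact absurd habs.symm (ne_of_gt hε)
    have htw : t ≠ w := by
      intro h; rw [h] at habs; exact absurd habs (ne_of_lt (by linarith))
    have hexp : Complex.exp (x * t) ^ n = Complex.exp (a * t) := by
      rw [← Complex.exp_nat_mul, ha]; congr 1; ring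
    have hpf := pfrac n t w ht hw htw
    simp only
    rw [div_pow, div_eq_mul_inv, hexp]
    rw [show Complex.exp (a * t) * (t ^ n)⁻¹ * (t - w)⁻¹
        = Complex.exp (a * t) * ((t - w)⁻¹ * (t ^ n)⁻¹) by ring, hpf]
    rw [mul_sub, Finset.mul_sum]
    congr 1
    · ring
    · exact Finset.sum_congr rfl fun j _ => by ring
  rw [circleIntegral.integral_congr hε.le hEq]
  -- integrability
  have hw_not : w ∉ closedBall (0 : ℂ) ε := by
    simp [Complex.dist_eq]; linarith
  have hcont1 : ContinuousOn (fun t : ℂ => Complex.exp (a * t) * (t - w)⁻¹)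
      (closedBall (0 : ℂ) ε) := by
    apply ContinuousOn.mul (by fun_prop)
    apply ContinuousOn.inv₀ (by fun_prop)
    intro t htc
    exact sub_ne_zero.mpr (fun h => hw_not (h ▸ htc))
  have hint1 : CircleIntegrable (fun t : ℂ => (w ^ n)⁻¹ * (Complex.exp (a * t) * (t - w)⁻¹)) 0 ε :=
    ContinuousOn.circleIntegrable hε.le <|
      (continuousOn_const.mul (hcont1.mono sphere_subset_closedBall))
  have hfj : ∀ j : ℕ, CircleIntegrable
      (fun t : ℂ => (w ^ (n - j))⁻¹ * (Complex.exp (a * t) * ((t : ℂ) ^ (j + 1))⁻¹)) 0 ε := by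
    intro j
    apply ContinuousOn.circleIntegrable hε.le
    apply ContinuousOn.mul continuousOn_const
    apply ContinuousOn.mul (by fun_prop)
    apply ContinuousOn.inv₀ (by fun_prop)
    intro t htmem
    have habs : ‖t‖ = ε := by
      simpa [Complex.dist_eq] using mem_sphere_iff_norm.mp htmem
    have ht : t ≠ 0 := by
      intro h; rw [h] at habs; simp at habs; exact absurd habs.symm (ne_of_gt hε)
    exact pow_ne_zero _ ht
  have hint2 : CircleIntegrable (fun t : ℂ =>
      ∑ j ∈ Finset.range n, (w ^ (n - j))⁻¹ * (Complex.exp (a * t) * ((t : ℂ) ^ (j + 1))⁻¹)) 0 ε := by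
    classical
    induction (Finset.range n) using Finset.induction_on with
    | empty => simpa using circleIntegrable_const (0 : ℂ) (0 : ℂ) ε
    | insert _ _ h ih =>
      simp only [Finset.sum_insert h]
      exact (hfj _).add ih
  rw [circleIntegral.integral_sub hint1 hint2]
  rw [circleIntegral_finset_sum _ _ _ _ (fun j _ => hfj j)]
  -- first integral is zero
  have hzero : (∮ t in C(0, ε), (w ^ n)⁻¹ * (Complex.exp (a * t) * (t - w)⁻¹)) = 0 := by
    apply Complex.circleIntegral_eq_zero_of_differentiable_on_off_countable hε.le
        Set.countable_empty (continuousOn_const.mul hcont1)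
    intro z hz
    have hzw : z - w ≠ 0 := by
      refine sub_ne_zero.mpr fun h => hw_not ?_
      exact h ▸ ball_subset_closedBall hz.1
    apply DifferentiableAt.const_mul
    exact ((differentiable_exp.comp ((differentiable_const a).mul differentiable_id)) z).mul
      (DifferentiableAt.inv (by fun_prop) hzw)
  rw [hzero, zero_sub]
  -- each sum integral
  have hsumInt : ∀ j ∈ Finset.range n,
      (∮ t in C(0, ε), (w ^ (n - j))⁻¹ * (Complex.exp (a * t) * ((t : ℂ) ^ (j + 1))⁻¹))
        = (w ^ (n - j))⁻¹ * ((2 * (Real.pi : ℂ) * Complex.I) * (a ^ j / (Nat.factorial j : ℂ))) := by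
    intro j _
    have hs := circleIntegral.integral_smul ((w ^ (n - j))⁻¹)
      (fun t : ℂ => Complex.exp (a * t) * ((t : ℂ) ^ (j + 1))⁻¹) 0 ε
    simp only [smul_eq_mul] at hs
    rw [hs, cauchy_exp a j hε]
  rw [Finset.sum_congr rfl hsumInt]
  -- final algebra
  have h2pi : (2 * (Real.pi : ℂ) * Complex.I) ≠ 0 := by
    simp [Real.pi_ne_zero, Complex.I_ne_zero]
  rw [mul_neg, neg_inj, Finset.mul_sum, Finset.mul_sum]
  apply Finset.sum_congr rfl
  intro j hj
  have hjn : j ≤ n := le_of_lt (Finset.mem_range.mp hj)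
  have hwp : w ^ (n - j) * w ^ j = w ^ n := by
    rw [← pow_add]; congr 1; omega
  have hzp : w ^ (-(n : ℤ)) = (w ^ n)⁻¹ := by
    rw [zpow_neg, zpow_natCast]
  rw [hzp]
  have hnwx : ((n : ℂ) * w * x) ^ j = w ^ j * a ^ j := by
    rw [ha]; ring
  rw [hnwx]
  have hwn : (w ^ n : ℂ) ≠ 0 := pow_ne_zero _ hw
  have hwnj : (w ^ (n - j) : ℂ) ≠ 0 := pow_ne_zero _ hw
  have hfac : ((Nat.factorial j : ℂ)) ≠ 0 := Nat.cast_ne_zero.mpr (Nat.factorial_ne_zero j)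
  field_simp
  rw [← hwp]
  ring
end

section
/- Fix α with 1/3 < α < 1/2 and let K be a compact subset of the open half-plane {w ∈ ℂ : Re w < 1}. Then there exists C > 0 such that for every integer n ≥ 1 and every w ∈ K, | S_{n−1}(n w) e^{−n w} − 1 + (w e^{1−w})^n / (√(2πn)(1−w)) | ≤ C n^{1−3α} · |(w e^{1−w})^n| / (√(2πn) |1−w|). -/
open Real Stirling Filter

lemma telescope_bound (p m : ℕ) :
    Real.log (stirlingSeq (p + 1)) - Real.log (stirlingSeq (p + 1 + m)) ≤
      1 / (2 * ((p : ℝ) + 1)) - 1 / (2 * ((p : ℝ) + 1 + m)) := by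
  induction m with
  | zero => simp
  | succ m ih =>
    have key := log_stirlingSeq_sub_log_stirlingSeq_succ (p + m + 1)
    rw [show p + m + 1 + 1 = p + 1 + (m + 1) from by ring, show p + m + 1 = p + 1 + m from by ring] at key
    have hp : (0:ℝ) ≤ (p:ℝ) := Nat.cast_nonneg p
    have hm : (0:ℝ) ≤ (m:ℝ) := Nat.cast_nonneg m
    have h2 : 1 / (4 * ((p : ℝ) + 1 + m) ^ 2) ≤
        1 / (2 * ((p : ℝ) + 1 + m)) - 1 / (2 * ((p : ℝ) + 1 + (m + 1))) := by
      rw [div_sub_div _ _ (by positivity) (by positivity), div_le_div_iff₀ (by positivity) (by positivity)]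
      nlinarith [sq_nonneg ((p:ℝ) + m)]
    push_cast at *
    linarith

lemma sqrt_pi_le (n : ℕ) (hn : 1 ≤ n) : Real.sqrt Real.pi ≤ stirlingSeq n := by
  obtain ⟨p, rfl⟩ : ∃ p, n = p + 1 := ⟨n - 1, (Nat.succ_pred_eq_of_pos hn).symm⟩
  have h : Filter.Tendsto (stirlingSeq ∘ Nat.succ) atTop (nhds (Real.sqrt Real.pi)) :=
    tendsto_stirlingSeq_sqrt_pi.comp (Filter.tendsto_add_atTop_nat 1)
  exact stirlingSeq'_antitone.le_of_tendsto h p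

lemma stirling_le (n : ℕ) (hn : 1 ≤ n) :
    stirlingSeq n ≤ Real.sqrt Real.pi * Real.exp (1 / (2 * n)) := by
  obtain ⟨p, rfl⟩ : ∃ p, n = p + 1 := ⟨n - 1, (Nat.succ_pred_eq_of_pos hn).symm⟩
  have hpos : 0 < stirlingSeq (p + 1) := stirlingSeq'_pos p
  have hπ : (0:ℝ) < Real.sqrt Real.pi := Real.sqrt_pos.2 Real.pi_pos
  have hsub : Filter.Tendsto (fun m => stirlingSeq (p + 1 + m)) atTop (nhds (Real.sqrt Real.pi)) := by
    have := tendsto_stirlingSeq_sqrt_pi.comp (Filter.tendsto_add_atTop_nat (p + 1))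
    simpa [Function.comp_def, Nat.add_comm] using this
  have hlim : Tendsto (fun m => Real.log (stirlingSeq (p + 1)) - Real.log (stirlingSeq (p + 1 + m)))
      atTop (nhds (Real.log (stirlingSeq (p + 1)) - Real.log (Real.sqrt Real.pi))) :=
    Tendsto.sub tendsto_const_nhds ((Real.continuousAt_log hπ.ne').tendsto.comp hsub)
  have hle : Real.log (stirlingSeq (p + 1)) - Real.log (Real.sqrt Real.pi) ≤ 1 / (2 * ((p:ℝ) + 1)) := by
    apply le_of_tendsto hlim
    filter_upwards with m
    have h1 := telescope_bound p m
    have h2 : (0:ℝ) < 1 / (2 * ((p : ℝ) + 1 + m)) := by positivity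
    linarith
  have hcast : ((p + 1 : ℕ) : ℝ) = (p : ℝ) + 1 := by push_cast; ring
  rw [hcast]
  calc stirlingSeq (p + 1) = Real.exp (Real.log (stirlingSeq (p + 1))) := (Real.exp_log hpos).symm
    _ ≤ Real.exp (Real.log (Real.sqrt Real.pi) + 1 / (2 * ((p:ℝ) + 1))) :=
        Real.exp_le_exp.2 (by linarith)
    _ = Real.sqrt Real.pi * Real.exp (1 / (2 * ((p:ℝ) + 1))) := by
        rw [Real.exp_add, Real.exp_log hπ]

open Complex Finset

noncomputable def Phi (n : ℕ) (w : ℂ) (s : ℝ) : ℂ :=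
  (∑ k ∈ Finset.range n, ((n:ℂ)*((s:ℂ)*w))^k / (Nat.factorial k : ℂ)) *
    Complex.exp (-(n:ℂ)*((s:ℂ)*w))
  + ((n:ℂ)^n / (n.factorial : ℂ)) * (((s:ℂ)*w) * Complex.exp (-((s:ℂ)*w)))^n / (1 - (s:ℂ)*w)


lemma hasDerivAt_cpow_comp {f : ℝ → ℂ} {f' : ℂ} {t : ℝ} (hf : HasDerivAt f f' t) (k : ℕ) :
    HasDerivAt (fun s => f s ^ k) ((k:ℂ) * f t ^ (k-1) * f') t := by
  have h := HasDerivAt.scomp (x := t) (hasDerivAt_pow k (f t)) hf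
  convert h using 1
  · rfl
  · rfl
  simp [smul_eq_mul]
  ring

lemma hasDerivAt_Phi (m : ℕ) (w : ℂ) (t : ℝ) (ht : 1 - (t:ℂ)*w ≠ 0) :
    HasDerivAt (Phi (m+1) w)
      (((m+1:ℕ):ℂ)^(m+1) / ((m+1).factorial : ℂ) *
        (((t:ℂ)*w) * Complex.exp (-((t:ℂ)*w)))^(m+1) * w / (1 - (t:ℂ)*w)^2) t := by
  have hz : HasDerivAt (fun s : ℝ => (s:ℂ)*w) w t := by
    simpa using (Complex.ofRealCLM.hasDerivAt (x := t)).mul_const w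
  have hsum : HasDerivAt (fun s : ℝ => ∑ k ∈ Finset.range (m+1), (((m+1:ℕ):ℂ)*((s:ℂ)*w))^k / (Nat.factorial k : ℂ))
      (∑ k ∈ Finset.range (m+1), (k:ℂ) * (((m+1:ℕ):ℂ)*((t:ℂ)*w))^(k-1) * (((m+1:ℕ):ℂ)*w) / (Nat.factorial k : ℂ)) t :=
    HasDerivAt.fun_sum (fun k _ => (hasDerivAt_cpow_comp (hz.const_mul ((m+1:ℕ):ℂ)) k).div_const _)
  have hsumval : (∑ k ∈ Finset.range (m+1), (k:ℂ) * (((m+1:ℕ):ℂ)*((t:ℂ)*w))^(k-1) * (((m+1:ℕ):ℂ)*w) / (Nat.factorial k : ℂ))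
      = ((m+1:ℕ):ℂ) * w * ∑ j ∈ Finset.range m, (((m+1:ℕ):ℂ)*((t:ℂ)*w))^j / (Nat.factorial j : ℂ) := by
    rw [Finset.sum_range_succ']
    simp only [Nat.cast_zero, zero_mul, Nat.factorial_zero, Nat.cast_one, zero_div, add_zero]
    rw [Finset.mul_sum]
    refine Finset.sum_congr rfl fun i _ => ?_
    have hfac : ((i+1).factorial : ℂ) = ((i:ℂ)+1) * (i.factorial : ℂ) := by
      rw [Nat.factorial_succ]; push_cast; ring
    have hine : ((i:ℂ)+1) ≠ 0 := Nat.cast_add_one_ne_zero i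
    have hfne : (i.factorial : ℂ) ≠ 0 := Nat.cast_ne_zero.2 (Nat.factorial_ne_zero i)
    rw [hfac, show i + 1 - 1 = i from rfl]
    push_cast
    field_simp
  have hexp : HasDerivAt (fun s : ℝ => Complex.exp (-((m+1:ℕ):ℂ)*((s:ℂ)*w)))
      (Complex.exp (-((m+1:ℕ):ℂ)*((t:ℂ)*w)) * (-((m+1:ℕ):ℂ)*w)) t := (hz.const_mul (-((m+1:ℕ):ℂ))).cexp
  have h1 := hsum.fun_mul hexp
  rw [hsumval] at h1
  have hnum : HasDerivAt (fun s : ℝ => (((s:ℂ)*w) * Complex.exp (-((s:ℂ)*w)))^(m+1))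
      (((m+1:ℕ):ℂ) * (((t:ℂ)*w) * Complex.exp (-((t:ℂ)*w)))^(m+1-1) *
        (w * Complex.exp (-((t:ℂ)*w)) + ((t:ℂ)*w) * (Complex.exp (-((t:ℂ)*w)) * (-w)))) t := by
    have := hasDerivAt_cpow_comp (hz.mul (hz.neg.cexp)) (m+1)
    simpa using this
  have hden : HasDerivAt (fun s : ℝ => 1 - (s:ℂ)*w) (-w) t := by
    simpa using (hasDerivAt_const t (1:ℂ)).fun_sub hz
  have h2 := (hnum.fun_div hden ht).const_mul (((m+1:ℕ):ℂ)^(m+1) / ((m+1).factorial : ℂ))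
  have hfin := h1.fun_add h2
  unfold Phi
  convert hfin using 1
  · rfl
  · ext s; ring
  have hE : Complex.exp (-((m+1:ℕ):ℂ)*((t:ℂ)*w)) = Complex.exp (-((t:ℂ)*w)) ^ (m+1) := by
    rw [← Complex.exp_nat_mul]; ring_nf
  have hsplit : (∑ k ∈ Finset.range (m+1), (((m+1:ℕ):ℂ)*((t:ℂ)*w))^k / (Nat.factorial k : ℂ))
      = (∑ j ∈ Finset.range m, (((m+1:ℕ):ℂ)*((t:ℂ)*w))^j / (Nat.factorial j : ℂ))
        + (((m+1:ℕ):ℂ)*((t:ℂ)*w))^m / (Nat.factorial m : ℂ) := Finset.sum_range_succ _ m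
  rw [hsplit, hE, show m + 1 - 1 = m from rfl]
  have hfacn : (((m+1)).factorial : ℂ) = (((m+1:ℕ)):ℂ) * (m.factorial : ℂ) := by
    rw [Nat.factorial_succ]; push_cast; ring
  have hfne : (m.factorial : ℂ) ≠ 0 := Nat.cast_ne_zero.2 (Nat.factorial_ne_zero m)
  have hnne : (((m+1:ℕ)):ℂ) ≠ 0 := by push_cast; exact Nat.cast_add_one_ne_zero m
  have hq : (((m+1:ℕ):ℂ) * (((t:ℂ)*w) * Complex.exp (-((t:ℂ)*w)))^m *
        (w * Complex.exp (-((t:ℂ)*w)) + ((t:ℂ)*w) * (Complex.exp (-((t:ℂ)*w)) * (-w))) * (1 - (t:ℂ)*w)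
        - (((t:ℂ)*w) * Complex.exp (-((t:ℂ)*w)))^(m+1) * (-w)) / (1 - (t:ℂ)*w)^2
      = ((m+1:ℕ):ℂ) * (((t:ℂ)*w) * Complex.exp (-((t:ℂ)*w)))^m * Complex.exp (-((t:ℂ)*w)) * w
        + (((t:ℂ)*w) * Complex.exp (-((t:ℂ)*w)))^(m+1) * w / (1 - (t:ℂ)*w)^2 := by
    field_simp [ht]
    ring
  have hmain : (((m+1:ℕ):ℂ) * w * ∑ j ∈ Finset.range m, (((m+1:ℕ):ℂ)*((t:ℂ)*w))^j / (Nat.factorial j : ℂ)) *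
        Complex.exp (-((t:ℂ)*w)) ^ (m+1)
      + ((∑ j ∈ Finset.range m, (((m+1:ℕ):ℂ)*((t:ℂ)*w))^j / (Nat.factorial j : ℂ))
          + (((m+1:ℕ):ℂ)*((t:ℂ)*w))^m / (Nat.factorial m : ℂ)) *
          (Complex.exp (-((t:ℂ)*w)) ^ (m+1) * (-((m+1:ℕ):ℂ)*w))
      + ((m+1:ℕ):ℂ)^(m+1) / (((m+1)).factorial : ℂ) *
          (((m+1:ℕ):ℂ) * (((t:ℂ)*w) * Complex.exp (-((t:ℂ)*w)))^m * Complex.exp (-((t:ℂ)*w)) * w) = 0 := by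
    rw [hfacn]
    have h1 : (((m+1:ℕ):ℂ)*((t:ℂ)*w))^m = ((m+1:ℕ):ℂ)^m * ((t:ℂ)*w)^m := mul_pow _ _ _
    have h2 : (((t:ℂ)*w) * Complex.exp (-((t:ℂ)*w)))^m = ((t:ℂ)*w)^m * Complex.exp (-((t:ℂ)*w))^m := mul_pow _ _ _
    have h3 : ((m+1:ℕ):ℂ)^(m+1) = ((m+1:ℕ):ℂ)^m * ((m+1:ℕ):ℂ) := pow_succ _ _
    have h4 : Complex.exp (-((t:ℂ)*w))^(m+1) = Complex.exp (-((t:ℂ)*w))^m * Complex.exp (-((t:ℂ)*w)) := pow_succ _ _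
    rw [h1, h2, h3, h4]
    field_simp [hfne, show ((m:ℂ)+1) ≠ 0 from Nat.cast_add_one_ne_zero m]
    ring
  linear_combination (-((((m+1:ℕ):ℂ))^(m+1) / (((m+1)).factorial : ℂ))) * hq - hmain

lemma denom_re (w : ℂ) (t : ℝ) (ht0 : 0 ≤ t) (ht1 : t ≤ 1) :
    min 1 (1 - w.re) ≤ (1 - (t:ℂ)*w).re := by
  have : (1 - (t:ℂ)*w).re = 1 - t * w.re := by
    simp [Complex.sub_re, Complex.mul_re, Complex.ofReal_re, Complex.ofReal_im]
  rw [this]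
  rcases le_or_gt 0 w.re with h | h
  · have : t * w.re ≤ w.re := by nlinarith
    exact le_trans (min_le_right _ _) (by linarith)
  · have : t * w.re ≤ 0 := mul_nonpos_of_nonneg_of_nonpos ht0 h.le
    exact le_trans (min_le_left _ _) (by linarith)

lemma denom_ne (w : ℂ) (hw : w.re < 1) (t : ℝ) (ht0 : 0 ≤ t) (ht1 : t ≤ 1) :
    1 - (t:ℂ)*w ≠ 0 := by
  intro h
  have h2 := denom_re w t ht0 ht1
  rw [h] at h2
  simp only [Complex.zero_re] at h2
  have : 0 < min 1 (1 - w.re) := lt_min one_pos (by linarith)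
  linarith

lemma key_identity (m : ℕ) (w : ℂ) (hw : w.re < 1) :
    (∑ k ∈ Finset.range (m+1), (((m+1:ℕ):ℂ)*w)^k / (Nat.factorial k : ℂ)) *
        Complex.exp (-((m+1:ℕ):ℂ)*w) - 1
      + (((m+1:ℕ):ℂ)^(m+1) / ((m+1).factorial : ℂ)) * (w * Complex.exp (-w))^(m+1) / (1 - w)
    = ∫ t in (0:ℝ)..1, (((m+1:ℕ):ℂ)^(m+1) / ((m+1).factorial : ℂ)) *
        (((t:ℂ)*w) * Complex.exp (-((t:ℂ)*w)))^(m+1) * w / (1 - (t:ℂ)*w)^2 := by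
  have hderiv : ∀ t ∈ Set.uIcc (0:ℝ) 1, HasDerivAt (Phi (m+1) w)
      ((((m+1:ℕ):ℂ)^(m+1) / ((m+1).factorial : ℂ)) *
        (((t:ℂ)*w) * Complex.exp (-((t:ℂ)*w)))^(m+1) * w / (1 - (t:ℂ)*w)^2) t := by
    intro t ht
    rw [Set.uIcc_of_le zero_le_one] at ht
    exact hasDerivAt_Phi m w t (denom_ne w hw t ht.1 ht.2)
  have hcont : ContinuousOn (fun t : ℝ => (((m+1:ℕ):ℂ)^(m+1) / ((m+1).factorial : ℂ)) *
      (((t:ℂ)*w) * Complex.exp (-((t:ℂ)*w)))^(m+1) * w / (1 - (t:ℂ)*w)^2) (Set.uIcc (0:ℝ) 1) := by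
    apply ContinuousOn.div
    · exact Continuous.continuousOn (by fun_prop)
    · exact Continuous.continuousOn (by fun_prop)
    · intro t ht
      rw [Set.uIcc_of_le zero_le_one] at ht
      exact pow_ne_zero 2 (denom_ne w hw t ht.1 ht.2)
  have hint := intervalIntegral.integral_eq_sub_of_hasDerivAt hderiv hcont.intervalIntegrable
  rw [hint]
  have hPhi1 : Phi (m+1) w 1 = (∑ k ∈ Finset.range (m+1), (((m+1:ℕ):ℂ)*w)^k / (Nat.factorial k : ℂ)) *
      Complex.exp (-((m+1:ℕ):ℂ)*w)
    + (((m+1:ℕ):ℂ)^(m+1) / ((m+1).factorial : ℂ)) * (w * Complex.exp (-w))^(m+1) / (1 - w) := by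
    unfold Phi; norm_num
  have hPhi0 : Phi (m+1) w 0 = 1 := by
    unfold Phi
    rw [Finset.sum_range_succ']
    norm_num
  rw [hPhi1, hPhi0]
  ring

lemma stirling_r (n : ℕ) (hn : 1 ≤ n) :
    Real.sqrt (2*Real.pi*n) * (n:ℝ)^n / ((n.factorial : ℝ) * Real.exp 1 ^ n) ≤ 1 ∧
    1 - 1/(n:ℝ) ≤ Real.sqrt (2*Real.pi*n) * (n:ℝ)^n / ((n.factorial : ℝ) * Real.exp 1 ^ n) := by
  have hnpos : (0:ℝ) < n := by exact_mod_cast hn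
  have hfac : (0:ℝ) < (n.factorial : ℝ) := by exact_mod_cast n.factorial_pos
  have hepos : (0:ℝ) < Real.exp 1 ^ n := by positivity
  have hsq2n : (0:ℝ) < Real.sqrt (2*n) := Real.sqrt_pos.2 (by positivity)
  have hπ : (0:ℝ) < Real.sqrt Real.pi := Real.sqrt_pos.2 Real.pi_pos
  have hrs : Real.sqrt (2*Real.pi*n) * (n:ℝ)^n / ((n.factorial : ℝ) * Real.exp 1 ^ n)
      = Real.sqrt Real.pi / Stirling.stirlingSeq n := by
    rw [Stirling.stirlingSeq, show 2*Real.pi*(n:ℝ) = Real.pi * (2*n) from by ring,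
      Real.sqrt_mul Real.pi_nonneg, div_pow]
    field_simp
  have hspos : 0 < Stirling.stirlingSeq n := lt_of_lt_of_le hπ (sqrt_pi_le n hn)
  constructor
  · rw [hrs, div_le_one hspos]; exact sqrt_pi_le n hn
  · rw [hrs]
    have h2n : 1/(2*(n:ℝ)) ≤ 1/(n:ℝ) := by
      apply div_le_div_of_nonneg_left one_pos.le hnpos; linarith
    calc 1 - 1/(n:ℝ) ≤ Real.exp (-(1/(2*(n:ℝ)))) := by
          have := Real.add_one_le_exp (-(1/(2*(n:ℝ)))); linarith
      _ = Real.sqrt Real.pi / (Real.sqrt Real.pi * Real.exp (1/(2*(n:ℝ)))) := by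
          rw [Real.exp_neg]
          field_simp
      _ ≤ Real.sqrt Real.pi / Stirling.stirlingSeq n := by
          gcongr
          exact stirling_le n hn

lemma exp_int_bound (a : ℝ) (ha : 0 < a) :
    (∫ t in (0:ℝ)..1, Real.exp (-a * (1 - t))) ≤ 1 / a := by
  have hd : ∀ t ∈ Set.uIcc (0:ℝ) 1,
      HasDerivAt (fun s : ℝ => Real.exp (-a*(1-s)) / a) (Real.exp (-a*(1-t))) t := by
    intro t _
    have h1 : HasDerivAt (fun s : ℝ => -a * (1 - s)) a t := by
      have h0 := ((hasDerivAt_const t (1:ℝ)).sub (hasDerivAt_id t)).const_mul (-a)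
      simpa using h0
    have h2 := (h1.exp).div_const a
    convert h2 using 1
    · rfl
    · rfl
    field_simp
  rw [intervalIntegral.integral_eq_sub_of_hasDerivAt hd
    ((Continuous.intervalIntegrable (by fun_prop) 0 1))]
  have h3 : 0 ≤ Real.exp (-a*(1-0)) / a := by positivity
  have h4 : Real.exp (-a*(1-1)) / a = 1/a := by norm_num
  linarith

lemma core_bound (t u ε : ℝ) (ht1 : t ≤ 1) (hε : 0 < ε) (hεw : ε ≤ 1 - u) :
    t * Real.exp (-(t*u)) ≤ Real.exp (-u) * Real.exp (-ε*(1-t)) := by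
  have h1 : t ≤ Real.exp (t-1) := by
    have := Real.add_one_le_exp (t-1); linarith
  have h2 : Real.exp (t-1) * Real.exp (-(t*u)) = Real.exp (t - 1 - t*u) := by
    rw [← Real.exp_add]; ring_nf
  have h3 : t - 1 - t*u ≤ -u + (-ε*(1-t)) := by
    nlinarith [mul_le_mul_of_nonneg_left hεw (by linarith : (0:ℝ) ≤ 1 - t)]
  calc t * Real.exp (-(t*u)) ≤ Real.exp (t-1) * Real.exp (-(t*u)) :=
        mul_le_mul_of_nonneg_right h1 (Real.exp_pos _).le
    _ = Real.exp (t - 1 - t*u) := h2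
    _ ≤ Real.exp (-u + (-ε*(1-t))) := Real.exp_le_exp.2 h3
    _ = Real.exp (-u) * Real.exp (-ε*(1-t)) := Real.exp_add _ _

lemma sum_bound (x D δ ε R' : ℝ) (hδ : 0 < δ) (hε : 0 < ε) (hR' : 0 < R') (hD : 0 < D)
    (hxR : x ≤ R') (hx0 : 0 ≤ x) (hDle : D ≤ 1 + R') :
    x / (δ^2*ε) + 1/D ≤ (1 + R'*(1+R')/(δ^2*ε)) / D := by
  rw [div_add_div _ _ (by positivity : (δ^2*ε) ≠ 0) hD.ne',
    div_le_div_iff₀ (by positivity) hD]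
  have hCe : (1 + R'*(1+R')/(δ^2*ε)) * (δ^2*ε) = δ^2*ε + R'*(1+R') := by
    field_simp
  have hwD : x * D ≤ R' * (1+R') :=
    mul_le_mul hxR hDle hD.le hR'.le
  nlinarith [mul_pos (mul_pos (mul_pos hδ hδ) hε) hD, sq_nonneg δ]


/-- Left-half plane Szegő approximation: for `1/3 < α < 1/2` and `K`
compact in `{Re w < 1}`, there is `C > 0` with
`|S_{n−1}(nw) e^{−nw} − 1 + (w e^{1−w})^n/(√(2πn)(1−w))|
  ≤ C n^{1−3α} |(w e^{1−w})^n| / (√(2πn)|1−w|)`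
for all `n ≥ 1` and `w ∈ K`. -/
theorem stmt_2 (α : ℝ) (hα1 : 1 / 3 < α) (hα2 : α < 1 / 2)
    (K : Set ℂ) (hK : IsCompact K) (hKre : ∀ w ∈ K, w.re < 1) :
    ∃ C > 0, ∀ n : ℕ, 1 ≤ n → ∀ w ∈ K,
      ‖(∑ k ∈ Finset.range n, ((n : ℂ) * w) ^ k / (Nat.factorial k : ℂ)) *
            Complex.exp (-(n : ℂ) * w) - 1 +
          (w * Complex.exp (1 - w)) ^ n /
            ((Real.sqrt (2 * Real.pi * n) : ℂ) * (1 - w))‖ ≤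
      C * (n : ℝ) ^ ((1 : ℝ) - 3 * α) *
        ‖(w * Complex.exp (1 - w)) ^ n‖ /
          (Real.sqrt (2 * Real.pi * n) * ‖1 - w‖) := by
  rcases Set.eq_empty_or_nonempty K with rfl | hne
  · exact ⟨1, one_pos, fun n hn w hw => absurd hw (Set.notMem_empty w)⟩
  obtain ⟨R, hR⟩ := hK.isBounded.exists_norm_le
  obtain ⟨w₀, hw₀K, hw₀max⟩ := hK.exists_isMaxOn hne Complex.continuous_re.continuousOn
  have hu₀ : w₀.re < 1 := hKre w₀ hw₀K
  set ε := 1 - w₀.re with hεdef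
  have hεpos : 0 < ε := by simp only [hεdef]; linarith
  clear_value ε
  set δ := min 1 ε with hδdef
  have hδpos : 0 < δ := lt_min one_pos hεpos
  set R' := max R 1 with hR'def
  have hR'pos : (0:ℝ) < R' := lt_of_lt_of_le one_pos (le_max_right _ _)
  have hq1 : 0 < δ^2 * ε := mul_pos (pow_pos hδpos 2) hεpos
  refine ⟨1 + R' * (1 + R') / (δ^2 * ε),
    add_pos_of_pos_of_nonneg one_pos (div_nonneg (by positivity) hq1.le), ?_⟩
  set C := 1 + R' * (1 + R') / (δ^2 * ε) with hCdef
  have hCpos : 0 < C :=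
    add_pos_of_pos_of_nonneg one_pos (div_nonneg (by positivity) hq1.le)
  intro n hn w hwK
  obtain ⟨m, rfl⟩ : ∃ m, n = m + 1 := ⟨n - 1, (Nat.succ_pred_eq_of_pos hn).symm⟩
  have hwre : w.re < 1 := hKre w hwK
  have hεw : ε ≤ 1 - w.re := by
    have h2 : w.re ≤ w₀.re := hw₀max hwK
    simp only [hεdef]
    linarith
  have hwabs : ‖w‖ ≤ R' := by
    have := hR w hwK
    exact le_trans this (le_max_left _ _)
  have h1wne : (1 : ℂ) - w ≠ 0 := by
    intro h
    have : (1 - w).re = 0 := by rw [h]; simp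
    simp only [Complex.sub_re, Complex.one_re] at this
    linarith
  set D := ‖1 - w‖ with hDdef
  have hD : 0 < D := by
    rw [hDdef]
    exact norm_pos_iff.2 h1wne
  have hDle : D ≤ 1 + R' := by
    rw [hDdef]
    calc ‖1 - w‖ ≤ ‖(1:ℂ)‖ + ‖w‖ := by
          simpa using norm_sub_le (1:ℂ) w
      _ ≤ 1 + R' := by simp; exact hwabs
  have hnn1 : (1:ℝ) ≤ ((m+1:ℕ):ℝ) := by exact_mod_cast Nat.le_add_left 1 m
  have hnnpos : (0:ℝ) < ((m+1:ℕ):ℝ) := lt_of_lt_of_le one_pos hnn1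
  -- Stirling bounds
  obtain ⟨hr1, hr2⟩ := stirling_r (m+1) (Nat.le_add_left 1 m)
  set Q := Real.sqrt (2 * Real.pi * ((m+1:ℕ):ℝ)) with hQdef
  have hQpos : 0 < Q := Real.sqrt_pos.2 (by positivity)
  set en := Real.exp 1 ^ (m+1) with hendef
  have henpos : 0 < en := by positivity
  set c := ((m+1:ℕ):ℝ)^(m+1) / (((m+1).factorial : ℕ) : ℝ) with hcdef
  have hfacpos : (0:ℝ) < (((m+1).factorial : ℕ) : ℝ) := by exact_mod_cast (m+1).factorial_pos
  have hcpos : 0 < c := by positivity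
  have hrcq : Q * ((m+1:ℕ):ℝ)^(m+1) / ((((m+1).factorial : ℕ):ℝ) * en) = Q * c / en := by
    rw [hcdef]; field_simp
  rw [hrcq] at hr1 hr2
  have hcen : c ≤ en / Q := by
    have h := (div_le_one henpos).mp hr1
    rw [le_div_iff₀ hQpos]
    linarith
  have hstir : |en/Q - c| ≤ (1/((m+1:ℕ):ℝ)) * (en/Q) := by
    have heq : en/Q - c = (1 - Q*c/en) * (en/Q) := by
      field_simp
    rw [heq, abs_mul]
    have h1 : |1 - Q*c/en| ≤ 1/((m+1:ℕ):ℝ) := by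
      have h0 : (0:ℝ) ≤ 1 - Q*c/en := by linarith
      rw [_root_.abs_of_nonneg h0]
      linarith
    have h2 : |en/Q| = en/Q := abs_of_pos (by positivity)
    rw [h2]
    apply mul_le_mul_of_nonneg_right h1 (by positivity)
  -- key identity
  have hcC : (((m+1:ℕ):ℂ)^(m+1) / (((m+1).factorial : ℕ) : ℂ)) = ((c:ℝ):ℂ) := by
    rw [hcdef]; push_cast; ring
  have hkey := key_identity m w hwre
  set J := ∫ t in (0:ℝ)..1, (((m+1:ℕ):ℂ)^(m+1) / (((m+1).factorial:ℕ) : ℂ)) *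
      (((t:ℂ)*w) * Complex.exp (-((t:ℂ)*w)))^(m+1) * w / (1 - (t:ℂ)*w)^2 with hJdef
  -- decomposition
  have hen2 : ((en:ℝ):ℂ) = Complex.exp 1 ^ (m+1) := by
    rw [hendef]; push_cast; norm_num
  have hGF : (w * Complex.exp (1 - w))^(m+1) = ((en:ℝ):ℂ) * (w * Complex.exp (-w))^(m+1) := by
    have h1 : Complex.exp (1 - w) = Complex.exp 1 * Complex.exp (-w) := by
      rw [← Complex.exp_add]; ring_nf
    rw [h1, hen2]; ring
  have hQC : ((Q:ℝ):ℂ) ≠ 0 := by exact_mod_cast hQpos.ne'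
  have hdecomp : (∑ k ∈ Finset.range (m+1), (((m+1:ℕ):ℂ) * w) ^ k / (Nat.factorial k : ℂ)) *
        Complex.exp (-((m+1:ℕ):ℂ) * w) - 1 +
        (w * Complex.exp (1 - w)) ^ (m+1) / (((Q:ℝ):ℂ) * (1 - w))
      = J + ((w * Complex.exp (-w))^(m+1) / (1 - w)) * (((en/Q - c : ℝ)):ℂ) := by
    have hcast : ((en/Q - c : ℝ) : ℂ) = ((en:ℝ):ℂ)/((Q:ℝ):ℂ) - ((c:ℝ):ℂ) := by
      push_cast; ring
    have hsplitden : (w * Complex.exp (1 - w))^(m+1) / (((Q:ℝ):ℂ) * (1 - w))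
        = (((en:ℝ):ℂ)/((Q:ℝ):ℂ)) * ((w * Complex.exp (-w))^(m+1) / (1 - w)) := by
      rw [hGF]
      field_simp
    rw [hsplitden, hcast]
    linear_combination hkey - ((w * Complex.exp (-w))^(m+1) / (1 - w)) * hcC
  -- pointwise and integral bounds
  set u := w.re with hudef
  set P := (‖w‖ * Real.exp (-u))^(m+1) with hPdef
  have hPnn : 0 ≤ P := by positivity
  have hδle : ∀ t : ℝ, 0 ≤ t → t ≤ 1 → δ ≤ ‖1 - (t:ℂ)*w‖ := by
    intro t ht0 ht1
    have h1 := denom_re w t ht0 ht1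
    have h2 : δ ≤ min 1 (1 - w.re) := le_min (min_le_left _ _) (le_trans (min_le_right _ _) hεw)
    exact le_trans (le_trans h2 h1) (Complex.re_le_norm _)
  have habsc : ‖((m+1:ℕ):ℂ)^(m+1) / (((m+1).factorial:ℕ):ℂ)‖ = c := by
    rw [hcC, Complex.norm_real, Real.norm_eq_abs, _root_.abs_of_nonneg hcpos.le]
  have hptw : ∀ t : ℝ, 0 < t → t ≤ 1 →
      ‖(((m+1:ℕ):ℂ)^(m+1) / (((m+1).factorial:ℕ) : ℂ)) *
        (((t:ℂ)*w) * Complex.exp (-((t:ℂ)*w)))^(m+1) * w / (1 - (t:ℂ)*w)^2‖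
      ≤ c * P * (‖w‖ / δ^2) * Real.exp (-(((m+1:ℕ):ℝ)*ε)*(1-t)) := by
    intro t ht0 ht1
    have hX : ‖((t:ℂ)*w) * Complex.exp (-((t:ℂ)*w))‖
        = t * ‖w‖ * Real.exp (-(t*u)) := by
      rw [norm_mul, norm_mul, Complex.norm_real, Real.norm_eq_abs, Complex.norm_exp, _root_.abs_of_pos ht0]
      congr 2
      simp [Complex.neg_re, Complex.mul_re, hudef]
    have e1 : ‖(((m+1:ℕ):ℂ)^(m+1) / (((m+1).factorial:ℕ) : ℂ)) *
        (((t:ℂ)*w) * Complex.exp (-((t:ℂ)*w)))^(m+1) * w / (1 - (t:ℂ)*w)^2‖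
        = c * (t * ‖w‖ * Real.exp (-(t*u)))^(m+1) * ‖w‖
            / (‖1 - (t:ℂ)*w‖)^2 := by
      rw [norm_div, norm_mul, norm_mul, norm_pow, norm_pow, habsc, hX]
    rw [e1]
    have hcore : t * Real.exp (-(t*u)) ≤ Real.exp (-u) * Real.exp (-ε*(1-t)) :=
      core_bound t u ε ht1 hεpos hεw
    have hX2 : t * ‖w‖ * Real.exp (-(t*u))
        ≤ (‖w‖ * Real.exp (-u)) * Real.exp (-ε*(1-t)) := by
      have h7 := mul_le_mul_of_nonneg_left hcore (norm_nonneg w)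
      calc t * ‖w‖ * Real.exp (-(t*u))
          = ‖w‖ * (t * Real.exp (-(t*u))) := by ring
        _ ≤ ‖w‖ * (Real.exp (-u) * Real.exp (-ε*(1-t))) := h7
        _ = (‖w‖ * Real.exp (-u)) * Real.exp (-ε*(1-t)) := by ring
    have hXpow : (t * ‖w‖ * Real.exp (-(t*u)))^(m+1) ≤ P * Real.exp (-(((m+1:ℕ):ℝ)*ε)*(1-t)) := by
      have h4 := pow_le_pow_left₀ (by positivity) hX2 (m+1)
      have h5 : (Real.exp (-ε*(1-t)))^(m+1) = Real.exp (-(((m+1:ℕ):ℝ)*ε)*(1-t)) := by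
        rw [← Real.exp_nat_mul]
        congr 1
        ring
      rw [hPdef]
      calc (t * ‖w‖ * Real.exp (-(t*u)))^(m+1)
          ≤ ((‖w‖ * Real.exp (-u)) * Real.exp (-ε*(1-t)))^(m+1) := h4
        _ = (‖w‖ * Real.exp (-u))^(m+1) * (Real.exp (-ε*(1-t)))^(m+1) := mul_pow _ _ _
        _ = (‖w‖ * Real.exp (-u))^(m+1) * Real.exp (-(((m+1:ℕ):ℝ)*ε)*(1-t)) := by
            rw [h5]
    have h6 : δ^2 ≤ (‖1 - (t:ℂ)*w‖)^2 :=
      pow_le_pow_left₀ hδpos.le (hδle t ht0.le ht1) 2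
    calc c * (t * ‖w‖ * Real.exp (-(t*u)))^(m+1) * ‖w‖
          / (‖1 - (t:ℂ)*w‖)^2
        ≤ c * (P * Real.exp (-(((m+1:ℕ):ℝ)*ε)*(1-t))) * ‖w‖ / δ^2 := by
          apply div_le_div₀ (by positivity) ?_ (pow_pos hδpos 2) h6
          exact mul_le_mul_of_nonneg_right
            (mul_le_mul_of_nonneg_left hXpow hcpos.le) (norm_nonneg w)
      _ = c * P * (‖w‖ / δ^2) * Real.exp (-(((m+1:ℕ):ℝ)*ε)*(1-t)) := by ring
  have hJb : ‖J‖ ≤ c * P * (‖w‖ / δ^2) * (1/(((m+1:ℕ):ℝ)*ε)) := by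
    rw [hJdef]
    have hae : ∀ᵐ (t : ℝ) ∂(MeasureTheory.volume.restrict (Set.uIoc (0:ℝ) 1)),
        ‖(((m+1:ℕ):ℂ)^(m+1) / (((m+1).factorial:ℕ) : ℂ)) *
            (((t:ℂ)*w) * Complex.exp (-((t:ℂ)*w)))^(m+1) * w / (1 - (t:ℂ)*w)^2‖
          ≤ c * P * (‖w‖ / δ^2) * Real.exp (-(((m+1:ℕ):ℝ)*ε)*(1-t)) := by
      refine (MeasureTheory.ae_restrict_mem measurableSet_uIoc).mono (fun t ht => ?_)
      rw [Set.uIoc_of_le zero_le_one] at ht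
      exact hptw t ht.1 ht.2
    have hgint : IntervalIntegrable
        (fun t => c * P * (‖w‖ / δ^2) * Real.exp (-(((m+1:ℕ):ℝ)*ε)*(1-t)))
        MeasureTheory.volume 0 1 := Continuous.intervalIntegrable (by fun_prop) 0 1
    refine le_trans (intervalIntegral.norm_integral_le_of_norm_le zero_le_one (by rw [Set.uIoc_of_le zero_le_one] at hae; exact (MeasureTheory.ae_restrict_iff' measurableSet_Ioc).1 hae) hgint) ?_
    rw [intervalIntegral.integral_const_mul]
    have hM : 0 ≤ c * P * (‖w‖ / δ^2) := by positivity
    have hInn : (0:ℝ) ≤ ∫ t in (0:ℝ)..1, Real.exp (-(((m+1:ℕ):ℝ)*ε)*(1-t)) :=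
      intervalIntegral.integral_nonneg zero_le_one (fun t _ => (Real.exp_pos _).le)
    exact mul_le_mul_of_nonneg_left (exp_int_bound (((m+1:ℕ):ℝ)*ε) (mul_pos hnnpos hεpos)) hM
  -- final chain
  have habsF : ‖(w * Complex.exp (-w))^(m+1)‖ = P := by
    rw [norm_pow, norm_mul, Complex.norm_exp, Complex.neg_re, hPdef, hudef]
  have habsG : ‖(w * Complex.exp (1-w))^(m+1)‖ = P * en := by
    rw [hGF, norm_mul, habsF, Complex.norm_real, Real.norm_eq_abs, _root_.abs_of_pos henpos]
    ring
  rw [hdecomp, habsG]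
  have step1 : ‖J + ((w * Complex.exp (-w))^(m+1) / (1 - w)) * (((en/Q - c : ℝ)):ℂ)‖
      ≤ ‖J‖ + P / D * |en/Q - c| := by
    refine le_trans (norm_add_le _ _) ?_
    have h8 : ‖((w * Complex.exp (-w))^(m+1) / (1 - w)) * (((en/Q - c : ℝ)):ℂ)‖
        = P / D * |en/Q - c| := by
      rw [norm_mul, norm_div, habsF, Complex.norm_real, Real.norm_eq_abs]
    rw [h8]
  have e2 : c * P * (‖w‖ / δ^2) * (1/(((m+1:ℕ):ℝ)*ε))
      ≤ (en/Q) * P * ((‖w‖ / (δ^2*ε)) * (1/((m+1:ℕ):ℝ))) := by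
    calc c * P * (‖w‖ / δ^2) * (1/(((m+1:ℕ):ℝ)*ε))
        ≤ (en/Q) * P * (‖w‖ / δ^2) * (1/(((m+1:ℕ):ℝ)*ε)) := by
          refine mul_le_mul_of_nonneg_right ?_ (one_div_nonneg.2 (mul_pos hnnpos hεpos).le)
          refine mul_le_mul_of_nonneg_right ?_ (by positivity)
          exact mul_le_mul_of_nonneg_right hcen hPnn
      _ = (en/Q) * P * ((‖w‖ / (δ^2*ε)) * (1/((m+1:ℕ):ℝ))) := by
          ring
  have e4 : P / D * |en/Q - c| ≤ (en/Q) * P * ((1/D) * (1/((m+1:ℕ):ℝ))) := by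
    calc P / D * |en/Q - c| ≤ P/D * ((1/((m+1:ℕ):ℝ)) * (en/Q)) :=
          mul_le_mul_of_nonneg_left hstir (by positivity)
      _ = (en/Q) * P * ((1/D) * (1/((m+1:ℕ):ℝ))) := by ring
  have hmid : ‖J‖ + P / D * |en/Q - c|
      ≤ (en/Q) * P * ((‖w‖ / (δ^2 * ε) + 1/D) * (1/((m+1:ℕ):ℝ))) := by
    have e5 : (en/Q) * P * ((‖w‖ / (δ^2*ε)) * (1/((m+1:ℕ):ℝ)))
        + (en/Q) * P * ((1/D) * (1/((m+1:ℕ):ℝ)))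
        = (en/Q)*P*((‖w‖ / (δ^2*ε) + 1/D) * (1/((m+1:ℕ):ℝ))) := by ring
    linarith [hJb, e2, e4]
  have hx : (‖w‖ / (δ^2*ε) + 1/D) * (1/((m+1:ℕ):ℝ))
      ≤ C * ((m+1:ℕ):ℝ)^((1:ℝ)-3*α) / D := by
    have hsum : ‖w‖ / (δ^2*ε) + 1/D ≤ C / D := by
      rw [hCdef]
      exact sum_bound (‖w‖) D δ ε R' hδpos hεpos hR'pos hD hwabs
        (norm_nonneg w) hDle
    have hn1 : (1:ℝ)/((m+1:ℕ):ℝ) ≤ ((m+1:ℕ):ℝ)^((1:ℝ)-3*α) := by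
      have h0 : ((m+1:ℕ):ℝ)^(-1:ℝ) = 1/((m+1:ℕ):ℝ) := by
        rw [Real.rpow_neg_one, one_div]
      rw [← h0]
      exact Real.rpow_le_rpow_of_exponent_le hnn1 (by linarith)
    calc (‖w‖ / (δ^2*ε) + 1/D) * (1/((m+1:ℕ):ℝ))
        ≤ (C/D) * (1/((m+1:ℕ):ℝ)) := by
          apply mul_le_mul_of_nonneg_right hsum (by positivity)
      _ ≤ (C/D) * ((m+1:ℕ):ℝ)^((1:ℝ)-3*α) := by
          apply mul_le_mul_of_nonneg_left hn1 (div_nonneg hCpos.le hD.le)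
      _ = C * ((m+1:ℕ):ℝ)^((1:ℝ)-3*α) / D := by ring
  calc ‖J + ((w * Complex.exp (-w))^(m+1) / (1 - w)) * (((en/Q - c : ℝ)):ℂ)‖
      ≤ (en/Q) * P * ((‖w‖ / (δ^2 * ε) + 1/D) * (1/((m+1:ℕ):ℝ))) :=
        le_trans step1 hmid
    _ ≤ (en/Q) * P * (C * ((m+1:ℕ):ℝ)^((1:ℝ)-3*α) / D) := by
        apply mul_le_mul_of_nonneg_left hx (by positivity)
    _ = C * ((m+1:ℕ):ℝ)^((1:ℝ)-3*α) * (P * en) / (Q * D) := by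
        ring
end

section
/- Let K be a compact subset of {x ∈ ℂ : |x| > 1/r_0}. Then there exists C > 0 such that for every integer n ≥ 1 and every x ∈ K, one has g(1/x) ≠ 0 and | √(2πn) · p_n(n x) · g(1/x) / (e x)^n − 1 | ≤ C/n. -/
open Finset Real
open scoped Nat

private lemma aux_fact_le {m n : ℕ} (h : m ≤ n) : n ! ≤ m ! * n ^ (n - m) := by
  induction n, h using Nat.le_induction with
  | base => simp
  | succ n hmn ih =>
    calc (n+1)! = (n+1) * n ! := rfl
    _ ≤ (n+1) * (m ! * n ^ (n-m)) := Nat.mul_le_mul_left _ ih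
    _ ≤ (n+1) * (m ! * (n+1) ^ (n-m)) := by gcongr <;> omega
    _ = m ! * ((n+1) ^ (n-m) * (n+1)) := by ring
    _ = m ! * (n+1)^(n-m+1) := by rw [pow_succ]
    _ = m ! * (n+1)^(n+1-m) := by
          have h5 : n - m + 1 = n + 1 - m := by omega
          rw [h5]

private lemma aux_fact_ge {n : ℕ} (hn : 0 < n) : ∀ k ≤ n,
    (1 - (k:ℝ)^2/(2*n)) * (((n-k)! : ℝ) * (n:ℝ)^k) ≤ (n ! : ℝ) := by
  intro k
  induction k with
  | zero => simp
  | succ k ih =>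
    intro hk
    have hk' : k ≤ n := by omega
    have IH := ih hk'
    have hnn : (0:ℝ) < n := by exact_mod_cast hn
    have hfac : ((n - k)! : ℝ) = ((n - (k+1))! : ℝ) * ((n:ℝ) - k) := by
      have h1 : n - k = (n - (k+1)) + 1 := by omega
      rw [h1, Nat.factorial_succ]
      have h2 : ((n - (k+1) : ℕ) : ℝ) = (n:ℝ) - ((k:ℝ)+1) := by
        rw [Nat.cast_sub (by omega : k+1 ≤ n)]; push_cast; ring
      push_cast
      rw [h2]; ring
    refine le_trans ?_ IH
    rw [hfac]
    have key : (1 - ((k:ℝ)+1)^2/(2*n)) * (n:ℝ) ≤ (1 - (k:ℝ)^2/(2*n)) * ((n:ℝ)-k) := by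
      have hdiff : (1 - (k:ℝ)^2/(2*n)) * ((n:ℝ)-k) - (1 - ((k:ℝ)+1)^2/(2*n)) * (n:ℝ)
          = 1/2 + (k:ℝ)^3/(2*n) := by field_simp; ring
      have ht : (0:ℝ) ≤ (k:ℝ)^3/(2*n) := by positivity
      linarith
    have hFn : (0:ℝ) ≤ ((n - (k+1))! : ℝ) * (n:ℝ)^k := by positivity
    calc (1 - (↑(k+1):ℝ)^2/(2*n)) * (((n - (k+1))! : ℝ) * (n:ℝ)^(k+1))
        = (((n - (k+1))! : ℝ) * (n:ℝ)^k) * ((1 - ((k:ℝ)+1)^2/(2*n)) * (n:ℝ)) := by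
          push_cast; ring
      _ ≤ (((n - (k+1))! : ℝ) * (n:ℝ)^k) * ((1 - (k:ℝ)^2/(2*n)) * ((n:ℝ)-k)) :=
          mul_le_mul_of_nonneg_left key hFn
      _ = (1 - (k:ℝ)^2/(2*n)) * ((((n - (k+1))! : ℝ) * ((n:ℝ)-k)) * (n:ℝ)^k) := by ring

private lemma aux_stirling_ge {n : ℕ} (hn : 1 ≤ n) : Real.sqrt π ≤ Stirling.stirlingSeq n := by
  obtain ⟨m, rfl⟩ := Nat.exists_eq_add_of_le hn
  have ht : Filter.Tendsto (Stirling.stirlingSeq ∘ Nat.succ) Filter.atTop (nhds (Real.sqrt π)) :=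
    Stirling.tendsto_stirlingSeq_sqrt_pi.comp (Filter.tendsto_add_atTop_nat 1)
  have := Stirling.stirlingSeq'_antitone.le_of_tendsto ht m
  simpa [Nat.succ_eq_add_one, add_comm] using this

private lemma aux_stirling_le {n : ℕ} (hn : 1 ≤ n) :
    Stirling.stirlingSeq n ≤ Real.sqrt π * Real.exp (1/(2*n)) := by
  set u : ℕ → ℝ := fun m => Real.log (Stirling.stirlingSeq (m+1)) - 1/(2*((m:ℝ)+1)) with hu
  have hmono : Monotone u := by
    apply monotone_nat_of_le_succ
    intro m
    have hd := Stirling.log_stirlingSeq_sub_log_stirlingSeq_succ (m+1)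
    have h2 : (1:ℝ)/(4 * (↑(m+1):ℝ)^2) ≤ 1/(2*((m:ℝ)+1)) - 1/(2*((m:ℝ)+1+1)) := by
      have hm : (0:ℝ) ≤ (m:ℝ) := Nat.cast_nonneg m
      rw [div_sub_div _ _ (by positivity) (by positivity), div_le_div_iff₀ (by positivity) (by positivity)]
      push_cast
      ring_nf
      nlinarith [hm]
    simp only [hu]
    push_cast at hd h2 ⊢
    linarith
  have hlim : Filter.Tendsto u Filter.atTop (nhds (Real.log (Real.sqrt π))) := by
    have h1 : Filter.Tendsto (fun m : ℕ => Real.log (Stirling.stirlingSeq (m+1)))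
        Filter.atTop (nhds (Real.log (Real.sqrt π))) := by
      apply (Real.continuousAt_log (by positivity : Real.sqrt π ≠ 0)).tendsto.comp
      exact Stirling.tendsto_stirlingSeq_sqrt_pi.comp (Filter.tendsto_add_atTop_nat 1)
    have h2 : Filter.Tendsto (fun m : ℕ => 1/(2*((m:ℝ)+1))) Filter.atTop (nhds 0) := by
      have := tendsto_one_div_add_atTop_nhds_zero_nat (𝕜 := ℝ)
      have h3 : Filter.Tendsto (fun m : ℕ => (1/2 : ℝ) * (1/((m:ℝ)+1))) Filter.atTop (nhds ((1/2) * 0)) :=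
        this.const_mul _
      simpa [one_div, mul_comm, mul_assoc, mul_inv] using h3
    have h4 := h1.sub h2
    rw [sub_zero] at h4
    exact h4
  obtain ⟨m, rfl⟩ := Nat.exists_eq_add_of_le hn
  rw [add_comm 1 m]
  push_cast
  have hum := hmono.ge_of_tendsto hlim m
  have hpos : 0 < Stirling.stirlingSeq (m+1) := Stirling.stirlingSeq'_pos m
  have : Real.log (Stirling.stirlingSeq (m+1)) ≤ Real.log (Real.sqrt π) + 1/(2*((m:ℝ)+1)) := by
    simp only [hu] at hum; linarith
  calc Stirling.stirlingSeq (m+1) = Real.exp (Real.log (Stirling.stirlingSeq (m+1))) :=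
        (Real.exp_log hpos).symm
    _ ≤ Real.exp (Real.log (Real.sqrt π) + 1/(2*((m:ℝ)+1))) := Real.exp_le_exp.2 this
    _ = Real.sqrt π * Real.exp (1/(2*((m:ℝ)+1))) := by
        rw [Real.exp_add, Real.exp_log (by positivity)]

private noncomputable def dnk (n k : ℕ) : ℝ :=
  Real.sqrt (2*Real.pi*n) * ((n:ℝ)^(n-k) * Real.exp (-(n:ℝ))) / ((n-k)! : ℝ)

private lemma aux_sqrt_split (n : ℕ) :
    Real.sqrt (2*Real.pi*n) = Real.sqrt Real.pi * Real.sqrt (2*n) := by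
  rw [← Real.sqrt_mul Real.pi_pos.le]
  congr 1; ring

private lemma aux_pow_div_exp (n : ℕ) :
    ((n:ℝ) / Real.exp 1) ^ n = (n:ℝ)^n * Real.exp (-(n:ℝ)) := by
  rw [div_pow, ← Real.exp_nat_mul, mul_one, Real.exp_neg, div_eq_mul_inv]

private lemma aux_fact_lb {n : ℕ} (hn : 1 ≤ n) :
    Real.sqrt (2*Real.pi*n) * ((n:ℝ)^n * Real.exp (-(n:ℝ))) ≤ (n ! : ℝ) := by
  have hs := aux_stirling_ge hn
  have hD : (0:ℝ) < Real.sqrt (2*n) * ((n:ℝ)/Real.exp 1)^n := by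
    have : (0:ℝ) < (n:ℝ) := by exact_mod_cast hn
    positivity
  have h1 : Real.sqrt Real.pi * (Real.sqrt (2*n) * ((n:ℝ)/Real.exp 1)^n) ≤ (n ! : ℝ) := by
    rw [Stirling.stirlingSeq] at hs
    calc Real.sqrt Real.pi * (Real.sqrt (2*n) * ((n:ℝ)/Real.exp 1)^n)
        ≤ ((n ! : ℝ) / (Real.sqrt (2*n) * ((n:ℝ)/Real.exp 1)^n)) *
            (Real.sqrt (2*n) * ((n:ℝ)/Real.exp 1)^n) := by
          exact mul_le_mul_of_nonneg_right hs hD.le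
      _ = (n ! : ℝ) := div_mul_cancel₀ _ hD.ne'
  calc Real.sqrt (2*Real.pi*n) * ((n:ℝ)^n * Real.exp (-(n:ℝ)))
      = Real.sqrt Real.pi * (Real.sqrt (2*n) * ((n:ℝ)/Real.exp 1)^n) := by
        rw [aux_sqrt_split, aux_pow_div_exp]; ring
    _ ≤ (n ! : ℝ) := h1

private lemma aux_fact_ub {n : ℕ} (hn : 1 ≤ n) :
    (n ! : ℝ) ≤ Real.sqrt (2*Real.pi*n) * ((n:ℝ)^n * Real.exp (-(n:ℝ))) * Real.exp (1/(2*n)) := by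
  have hs := aux_stirling_le hn
  have hD : (0:ℝ) < Real.sqrt (2*n) * ((n:ℝ)/Real.exp 1)^n := by
    have : (0:ℝ) < (n:ℝ) := by exact_mod_cast hn
    positivity
  rw [Stirling.stirlingSeq, div_le_iff₀ hD] at hs
  calc (n ! : ℝ) ≤ Real.sqrt Real.pi * Real.exp (1/(2*n)) *
        (Real.sqrt (2*n) * ((n:ℝ)/Real.exp 1)^n) := hs
    _ = Real.sqrt (2*Real.pi*n) * ((n:ℝ)^n * Real.exp (-(n:ℝ))) * Real.exp (1/(2*n)) := by
        rw [aux_sqrt_split, aux_pow_div_exp]; ring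

private lemma dnk_pos {n k : ℕ} (hn : 1 ≤ n) : 0 < dnk n k := by
  have h1 : (0:ℝ) < (n:ℝ) := by exact_mod_cast hn
  have h2 : (0:ℝ) < ((n-k)! : ℝ) := by exact_mod_cast Nat.factorial_pos _
  have h3 : (0:ℝ) < Real.sqrt (2*Real.pi*n) := Real.sqrt_pos.2 (by positivity)
  unfold dnk; positivity

private lemma dnk_le_one {n k : ℕ} (hk : k ≤ n) (hn : 1 ≤ n) : dnk n k ≤ 1 := by
  have h1 : (0:ℝ) < (n:ℝ) := by exact_mod_cast hn
  have h2 : (0:ℝ) < ((n-k)! : ℝ) := by exact_mod_cast Nat.factorial_pos _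
  -- n! ≤ (n-k)! * n^k
  have h3 : (n ! : ℝ) ≤ ((n-k)! : ℝ) * (n:ℝ)^k := by
    have := aux_fact_le (Nat.sub_le n k)
    have h4 : n - (n - k) = k := by omega
    rw [h4] at this
    exact_mod_cast this
  have h5 := aux_fact_lb hn
  -- √(2πn) n^n e^{-n} ≤ (n-k)! * n^k
  have h6 : Real.sqrt (2*Real.pi*n) * ((n:ℝ)^n * Real.exp (-(n:ℝ))) ≤ ((n-k)! : ℝ) * (n:ℝ)^k :=
    h5.trans h3
  rw [dnk, div_le_one h2]
  have h7 : (n:ℝ)^n = (n:ℝ)^(n-k) * (n:ℝ)^k := by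
    rw [← pow_add]; congr 1; omega
  rw [h7] at h6
  have h8 : (0:ℝ) < (n:ℝ)^k := by positivity
  apply le_of_mul_le_mul_right ?_ h8
  calc Real.sqrt (2*Real.pi*n) * ((n:ℝ)^(n-k) * Real.exp (-(n:ℝ))) * (n:ℝ)^k
      = Real.sqrt (2*Real.pi*n) * ((n:ℝ)^(n-k) * (n:ℝ)^k * Real.exp (-(n:ℝ))) := by ring
    _ ≤ ((n-k)! : ℝ) * (n:ℝ)^k := h6

private lemma dnk_ge {n k : ℕ} (hk : k ≤ n) (hn : 1 ≤ n) :
    1 - ((k:ℝ)^2+1)/n ≤ dnk n k := by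
  have h1 : (0:ℝ) < (n:ℝ) := by exact_mod_cast hn
  by_cases hcase : (n:ℝ) ≤ (k:ℝ)^2 + 1
  · have : 1 - ((k:ℝ)^2+1)/n ≤ 0 := by
      rw [sub_nonpos, le_div_iff₀ h1, one_mul]; exact hcase
    exact this.trans (dnk_pos hn).le
  push_neg at hcase
  have h2 : (0:ℝ) < ((n-k)! : ℝ) := by exact_mod_cast Nat.factorial_pos _
  have hfg := aux_fact_ge (by omega : 0 < n) k hk
  have hub := aux_fact_ub hn
  have h3 : (1 - (k:ℝ)^2/(2*n)) * (((n-k)! : ℝ) * (n:ℝ)^k) ≤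
      Real.sqrt (2*Real.pi*n) * ((n:ℝ)^n * Real.exp (-(n:ℝ))) * Real.exp (1/(2*n)) :=
    hfg.trans hub
  -- divide by (n-k)! * n^k * exp(1/(2n))
  have h8 : (0:ℝ) < (n:ℝ)^k := by positivity
  have h9 : (0:ℝ) < Real.exp (1/(2*(n:ℝ))) := Real.exp_pos _
  have h7 : (n:ℝ)^n = (n:ℝ)^(n-k) * (n:ℝ)^k := by
    rw [← pow_add]; congr 1; omega
  have h10 : (1 - (k:ℝ)^2/(2*n)) * Real.exp (-(1/(2*(n:ℝ)))) ≤ dnk n k := by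
    rw [dnk, le_div_iff₀ h2]
    rw [Real.exp_neg]
    rw [h7] at h3
    calc (1 - (k:ℝ)^2/(2*n)) * (Real.exp (1/(2*(n:ℝ))))⁻¹ * ((n-k)! : ℝ)
        = ((1 - (k:ℝ)^2/(2*n)) * (((n-k)! : ℝ) * (n:ℝ)^k)) / ((n:ℝ)^k * Real.exp (1/(2*(n:ℝ)))) := by
          field_simp
      _ ≤ (Real.sqrt (2*Real.pi*n) * ((n:ℝ)^(n-k) * (n:ℝ)^k * Real.exp (-(n:ℝ))) * Real.exp (1/(2*n))) /
            ((n:ℝ)^k * Real.exp (1/(2*(n:ℝ)))) := by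
          apply div_le_div_of_nonneg_right h3 (by positivity)
      _ = Real.sqrt (2*Real.pi*n) * ((n:ℝ)^(n-k) * Real.exp (-(n:ℝ))) := by
          field_simp
  refine le_trans ?_ h10
  -- 1 - (k²+1)/n ≤ (1 - k²/(2n)) * exp(-(1/(2n)))
  have hb : 1 - 1/(2*(n:ℝ)) ≤ Real.exp (-(1/(2*(n:ℝ)))) := by
    have := Real.add_one_le_exp (-(1/(2*(n:ℝ))))
    linarith
  have ha : (0:ℝ) ≤ 1 - (k:ℝ)^2/(2*n) := by
    rw [sub_nonneg, div_le_one (by positivity)]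
    nlinarith
  have e1 : ((k:ℝ)^2+1)/n = 2*((k:ℝ)^2/(2*n)) + 2*(1/(2*(n:ℝ))) := by
    field_simp
  have ha' : (0:ℝ) ≤ (k:ℝ)^2/(2*n) := by positivity
  have hb' : (0:ℝ) ≤ 1/(2*(n:ℝ)) := by positivity
  calc 1 - ((k:ℝ)^2+1)/n
      ≤ (1 - (k:ℝ)^2/(2*n)) * (1 - 1/(2*(n:ℝ))) := by rw [e1]; nlinarith
    _ ≤ (1 - (k:ℝ)^2/(2*n)) * Real.exp (-(1/(2*(n:ℝ)))) := mul_le_mul_of_nonneg_left hb ha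

private lemma appell_coeff (g : ℂ → ℂ) (hg : Differentiable ℂ g) (R : NNReal) (hR : 0 < R)
    (hgz : ∀ z : ℂ, ‖z‖ ≤ R → g z ≠ 0) (x' : ℂ) (n : ℕ) :
    (1 / (2 * (Real.pi : ℂ) * Complex.I)) *
      (∮ t in C(0, (R:ℝ)), Complex.exp (x' * t) / (g t * t ^ (n + 1)))
    = ∑ k ∈ Finset.range (n+1),
        x'^k / (k ! : ℂ) * (cauchyPowerSeries (fun t => (g t)⁻¹) 0 R).coeff (n - k) := by
  have hRpos : (0:ℝ) < R := hR
  set h : ℂ → ℂ := fun t => (g t)⁻¹ with hh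
  have hd : DifferentiableOn ℂ h (Metric.closedBall 0 (R:ℝ)) := by
    apply DifferentiableOn.inv hg.differentiableOn
    intro z hz
    exact hgz z (by simpa [Complex.dist_eq] using Metric.mem_closedBall.1 hz)
  set P := cauchyPowerSeries h 0 (R:ℝ) with hPdef
  have HP : HasFPowerSeriesOnBall h P 0 R := hd.hasFPowerSeriesOnBall hR
  set F : ℂ → ℂ := fun t => Complex.exp (x' * t) * h t with hF
  have hFd : DifferentiableOn ℂ F (Metric.closedBall 0 (R:ℝ)) := by
    apply DifferentiableOn.mul _ hd
    exact (Differentiable.cexp (differentiable_id.const_mul x')).differentiableOn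
  have HF : HasFPowerSeriesOnBall F (cauchyPowerSeries F 0 (R:ℝ)) 0 R :=
    hFd.hasFPowerSeriesOnBall hR
  -- LHS is the nth coefficient of cauchyPowerSeries F
  have hLHS : (1 / (2 * (Real.pi:ℂ) * Complex.I)) *
      (∮ t in C(0, (R:ℝ)), Complex.exp (x' * t) / (g t * t ^ (n + 1)))
      = (cauchyPowerSeries F 0 (R:ℝ)).coeff n := by
    have happ := cauchyPowerSeries_apply F 0 (R:ℝ) n 1
    have hint : (∮ z in C(0, (R:ℝ)), ((1:ℂ) / (z - 0)) ^ n • (z - 0)⁻¹ • F z)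
        = ∮ t in C(0, (R:ℝ)), Complex.exp (x' * t) / (g t * t ^ (n + 1)) := by
      apply circleIntegral.integral_congr hRpos.le
      intro z hz
      have hzR : ‖z‖ = R := by
        simpa [Complex.dist_eq] using hz
      have hz0 : z ≠ 0 := by
        intro h0
        rw [h0] at hzR
        simp at hzR
        exact hRpos.ne' hzR.symm
      have hgz' : g z ≠ 0 := hgz z (le_of_eq hzR)
      simp only [sub_zero, smul_eq_mul, hF, hh]
      field_simp
      ring_nf; rw [mul_assoc, ← mul_pow, mul_inv_cancel₀ hz0, one_pow, mul_one]
    have hcoeff : (cauchyPowerSeries F 0 (R:ℝ)).coeff n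
        = (cauchyPowerSeries F 0 (R:ℝ)) n (fun _ => 1) := rfl
    rw [hcoeff, happ, hint, smul_eq_mul, one_div]
  set c : ℕ → ℂ := fun m => ∑ k ∈ Finset.range (m+1), x'^k / (k ! : ℂ) * P.coeff (m-k) with hc
  set S := FormalMultilinearSeries.ofScalars ℂ c with hS
  -- summability of coefficient-norm series of P
  have hbnorm : ∀ r : NNReal, (r : ENNReal) < P.radius →
      Summable (fun j => ‖P.coeff j‖ * (r:ℝ)^j) := by
    intro r hr
    have := P.summable_norm_mul_pow hr
    simpa [FormalMultilinearSeries.norm_apply_eq_norm_coef] using this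
  -- Cauchy product identity
  have hcau : ∀ y : ℂ, ‖y‖ < R → HasSum (fun m => c m * y ^ m) (F y) := by
    intro y hy
    have hyball : y ∈ Metric.eball (0:ℂ) R := by
      rw [Metric.mem_eball, edist_zero_right]
      exact_mod_cast hy
    have hsum_h : HasSum (fun j => P.coeff j * y ^ j) (h y) := by
      have h1 := HP.hasSum hyball
      rw [zero_add] at h1
      simpa [FormalMultilinearSeries.apply_eq_pow_smul_coeff, smul_eq_mul, mul_comm] using h1
    have hsum_e : HasSum (fun k => x'^k * y^k / (k ! : ℂ)) (Complex.exp (x' * y)) := by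
      have h1 := NormedSpace.expSeries_div_hasSum_exp (x' * y)
      rw [← Complex.exp_eq_exp_ℂ] at h1
      simpa [mul_pow] using h1
    have hA : Summable (fun k => ‖x'^k * y^k / (k ! : ℂ)‖) := by
      have h1 := Real.summable_pow_div_factorial (‖x' * y‖)
      apply Summable.congr h1
      intro k
      simp [norm_div, ← mul_pow, Complex.norm_natCast, map_pow]
    have hyR : (‖y‖₊ : ENNReal) < P.radius := by
      refine lt_of_lt_of_le ?_ HP.r_le
      exact_mod_cast hy
    have hB : Summable (fun j => ‖P.coeff j * y^j‖) := by
      have h1 := hbnorm ‖y‖₊ hyR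
      apply Summable.congr h1
      intro j
      rw [norm_mul, norm_pow]
      norm_num
    have hs := (summable_norm_sum_mul_antidiagonal_of_summable_norm hA hB).of_norm
    have ht := tsum_mul_tsum_eq_tsum_sum_antidiagonal_of_summable_norm hA hB
    rw [hsum_e.tsum_eq, hsum_h.tsum_eq] at ht
    have key : HasSum (fun m => ∑ kl ∈ Finset.HasAntidiagonal.antidiagonal m,
        (x'^kl.1 * y^kl.1 / (kl.1 ! : ℂ)) * (P.coeff kl.2 * y^kl.2))
        (Complex.exp (x' * y) * h y) := by
      rw [ht]
      exact hs.hasSum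
    have hterm : ∀ m, ∑ kl ∈ Finset.HasAntidiagonal.antidiagonal m,
        (x'^kl.1 * y^kl.1 / (kl.1 ! : ℂ)) * (P.coeff kl.2 * y^kl.2) = c m * y^m := by
      intro m
      rw [Finset.Nat.sum_antidiagonal_eq_sum_range_succ_mk, hc]
      rw [Finset.sum_mul]
      apply Finset.sum_congr rfl
      intro k hk
      have hkm : k ≤ m := Nat.lt_succ_iff.1 (Finset.mem_range.1 hk)
      have hyp : y^k * y^(m-k) = y^m := by
        rw [← pow_add]; congr 1; omega
      field_simp
      rw [← hyp]
      ring
    rw [funext hterm] at key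
    exact key
  -- positive radius of S
  have hrad : 0 < S.radius := by
    have hhalf : (0:NNReal) < R/2 := by positivity
    refine lt_of_lt_of_le ?_ (S.le_radius_of_summable (r := R/2) ?_)
    · exact_mod_cast hhalf
    · -- Summable fun m => ‖S m‖ * ((R/2 : NNReal):ℝ)^m
      set r : ℝ := ((R/2 : NNReal) : ℝ) with hr
      have hrpos : 0 < r := by exact_mod_cast hhalf
      have hrR : r < R := by
        rw [hr]
        push_cast
        linarith
      have hA : Summable (fun k => ‖x'‖^k * r^k / (k ! : ℝ)) := by
        have h1 := Real.summable_pow_div_factorial (‖x'‖ * r)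
        apply Summable.congr h1
        intro k
        rw [mul_pow]
      have hrrad : ((R/2 : NNReal) : ENNReal) < P.radius := by
        refine lt_of_lt_of_le ?_ HP.r_le
        exact_mod_cast NNReal.half_lt_self hR.ne'
      have hB := hbnorm (R/2) hrrad
      have hAB := summable_norm_sum_mul_antidiagonal_of_summable_norm (R := ℝ)
        (f := fun k => ‖x'‖^k * r^k / (k ! : ℝ)) (g := fun j => ‖P.coeff j‖ * r^j) ?_ ?_
      · apply Summable.of_nonneg_of_le (fun m => by positivity) ?_ hAB.of_norm
        intro m
        rw [FormalMultilinearSeries.ofScalars_norm]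
        calc ‖c m‖ * r^m
            ≤ (∑ k ∈ Finset.range (m+1), ‖x'‖^k / (k ! : ℝ) * ‖P.coeff (m-k)‖) * r^m := by
              apply mul_le_mul_of_nonneg_right ?_ (by positivity)
              rw [hc]
              refine (norm_sum_le _ _).trans ?_
              apply le_of_eq
              apply Finset.sum_congr rfl
              intro k _
              rw [norm_mul, norm_div, norm_pow, Complex.norm_natCast]
          _ = ∑ kl ∈ Finset.HasAntidiagonal.antidiagonal m,
                (‖x'‖^kl.1 * r^kl.1 / (kl.1 ! : ℝ)) * (‖P.coeff kl.2‖ * r^kl.2) := by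
              rw [Finset.Nat.sum_antidiagonal_eq_sum_range_succ_mk, Finset.sum_mul]
              apply Finset.sum_congr rfl
              intro k hk
              have hkm : k ≤ m := Nat.lt_succ_iff.1 (Finset.mem_range.1 hk)
              have hyp : r^k * r^(m-k) = r^m := by
                rw [← pow_add]; congr 1; omega
              rw [← hyp]; ring
      · apply Summable.congr hA
        intro k
        rw [Real.norm_eq_abs, abs_of_nonneg (by positivity)]
      · apply Summable.congr hB
        intro j
        rw [Real.norm_eq_abs, abs_of_nonneg (by positivity)]
  have hSsum : HasFPowerSeriesAt S.sum S 0 := (S.hasFPowerSeriesOnBall hrad).hasFPowerSeriesAt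
  have heq : S.sum =ᶠ[nhds (0:ℂ)] F := by
    have hball : Metric.ball (0:ℂ) (R:ℝ) ∈ nhds (0:ℂ) := Metric.ball_mem_nhds _ hRpos
    filter_upwards [hball] with y hy
    have hy' : ‖y‖ < R := by simpa [Complex.dist_eq] using hy
    have h1 := hcau y hy'
    have h2 : S.sum y = ∑' m, c m * y ^ m := by
      rw [FormalMultilinearSeries.sum]
      apply tsum_congr
      intro m
      rw [hS, FormalMultilinearSeries.ofScalars_apply_eq, smul_eq_mul]
    rw [h2, h1.tsum_eq]
  have HFS : HasFPowerSeriesAt F S 0 := hSsum.congr heq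
  have huniq : cauchyPowerSeries F 0 (R:ℝ) = S :=
    HF.hasFPowerSeriesAt.eq_formalMultilinearSeries HFS
  rw [hLHS, huniq]
  have : S.coeff n = c n := by
    have : S.coeff n = S n (fun _ => 1) := rfl
    rw [this, hS, FormalMultilinearSeries.ofScalars_apply_eq, smul_eq_mul, one_pow, mul_one]
  rw [this]

set_option maxHeartbeats 2000000 in
/-- Let `g` be entire with `g 0 ≠ 0`, having at least one zero, with
minimal zero modulus `r₀ > 0`, and let `p n` be the Appell polynomials of `g`
(given by the contour integral formula). For `K` compact in `{|x| > 1/r₀}` there is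
`C > 0` so that for all `n ≥ 1` and `x ∈ K`, `g(1/x) ≠ 0` and
`|√(2πn) pₙ(nx) g(1/x)/(ex)^n − 1| ≤ C/n`. -/
theorem stmt_4 (g : ℂ → ℂ) (hg : Differentiable ℂ g) (hg0 : g 0 ≠ 0)
    (r0 : ℝ) (hr0pos : 0 < r0)
    (hr0 : IsLeast {r : ℝ | ∃ a : ℂ, g a = 0 ∧ ‖a‖ = r} r0)
    (p : ℕ → ℂ → ℂ)
    (hp : ∀ (n : ℕ) (x : ℂ) (ε : ℝ), 0 < ε → ε < r0 →
      p n x = (1 / (2 * (Real.pi : ℂ) * Complex.I)) *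
        ∮ t in C(0, ε), Complex.exp (x * t) / (g t * t ^ (n + 1)))
    (K : Set ℂ) (hK : IsCompact K) (hKx : ∀ x ∈ K, 1 / r0 < ‖x‖) :
    ∃ C > 0, ∀ n : ℕ, 1 ≤ n → ∀ x ∈ K,
      g (1 / x) ≠ 0 ∧
      ‖(Real.sqrt (2 * Real.pi * n) : ℂ) * p n ((n : ℂ) * x) * g (1 / x) /
          (Complex.exp 1 * x) ^ n - 1‖ ≤ C / n := by
  classical
  rcases K.eq_empty_or_nonempty with hKe | hne
  · subst hKe
    exact ⟨1, one_pos, fun n hn x hx => absurd hx (Set.notMem_empty x)⟩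
  have hr0inv : (0:ℝ) < 1/r0 := by positivity
  have habs_pos : ∀ x ∈ K, 0 < ‖x‖ := fun x hx => hr0inv.trans (hKx x hx)
  have hcont : ContinuousOn (fun x : ℂ => (‖x‖)⁻¹) K :=
    continuous_norm.continuousOn.inv₀ fun x hx => (habs_pos x hx).ne'
  obtain ⟨x0, hx0K, hx0max'⟩ := hK.exists_isMaxOn hne hcont
  have hx0max : ∀ x ∈ K, (‖x‖)⁻¹ ≤ (‖x0‖)⁻¹ := fun x hx => hx0max' hx
  set ρ : ℝ := (‖x0‖)⁻¹ with hρdef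
  have hρpos : 0 < ρ := inv_pos.2 (habs_pos x0 hx0K)
  have hρlt : ρ < r0 := by
    rw [hρdef, inv_lt_comm₀ (habs_pos x0 hx0K) hr0pos, ← one_div]
    exact hKx x0 hx0K
  have hyle : ∀ x ∈ K, ‖1/x‖ ≤ ρ := by
    intro x hx
    rw [one_div, norm_inv]
    exact hx0max x hx
  set Rr : ℝ := (ρ + r0)/2 with hRrdef
  have hRrpos : 0 < Rr := by rw [hRrdef]; linarith
  have hρRr : ρ < Rr := by rw [hRrdef]; linarith
  have hRrr0 : Rr < r0 := by rw [hRrdef]; linarith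
  set ρ' : ℝ := (ρ + Rr)/2 with hρ'def
  have hρρ' : ρ < ρ' := by rw [hρ'def]; linarith
  have hρ'Rr : ρ' < Rr := by rw [hρ'def]; linarith
  have hρ'pos : 0 < ρ' := lt_trans hρpos hρρ'
  set q : ℝ := ρ/ρ' with hqdef
  have hqpos : 0 < q := div_pos hρpos hρ'pos
  have hqlt : q < 1 := (div_lt_one hρ'pos).2 hρρ'
  have hgne : ∀ z : ℂ, ‖z‖ < r0 → g z ≠ 0 := by
    intro z hz hzero
    exact absurd (hr0.2 ⟨z, hzero, rfl⟩) (not_le.2 hz)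
  clear_value ρ Rr ρ' q
  set RN : NNReal := Real.toNNReal Rr with hRNdef
  have hRNR : (RN : ℝ) = Rr := Real.coe_toNNReal _ hRrpos.le
  have hRN0 : 0 < RN := by rw [hRNdef]; exact Real.toNNReal_pos.2 hRrpos
  have hgz' : ∀ z : ℂ, ‖z‖ ≤ (RN:ℝ) → g z ≠ 0 := fun z hz =>
    hgne z (lt_of_le_of_lt (by rwa [hRNR] at hz) hRrr0)
  set h : ℂ → ℂ := fun t => (g t)⁻¹ with hh
  have hd : DifferentiableOn ℂ h (Metric.closedBall 0 (RN:ℝ)) := by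
    apply DifferentiableOn.inv hg.differentiableOn
    intro z hz
    exact hgz' z (by simpa [Complex.dist_eq] using Metric.mem_closedBall.1 hz)
  set P := cauchyPowerSeries h 0 (RN:ℝ) with hPdef
  have HP : HasFPowerSeriesOnBall h P 0 RN := hd.hasFPowerSeriesOnBall hRN0
  set b : ℕ → ℂ := fun j => P.coeff j with hbdef
  have hρ'rad : ((Real.toNNReal ρ' : NNReal) : ENNReal) < P.radius := by
    refine lt_of_lt_of_le ?_ HP.r_le
    rw [ENNReal.coe_lt_coe, hRNdef]
    exact (Real.toNNReal_lt_toNNReal_iff hRrpos).2 hρ'Rr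
  obtain ⟨C0, hC0pos, hC0⟩ := P.norm_mul_pow_le_of_lt_radius hρ'rad
  have hbb : ∀ j, ‖b j‖ * ρ'^j ≤ C0 := by
    intro j
    have h1 := hC0 j
    rwa [FormalMultilinearSeries.norm_apply_eq_norm_coef, Real.coe_toNNReal _ hρ'pos.le] at h1
  have hbq : ∀ j, ‖b j‖ * ρ^j ≤ C0 * q^j := by
    intro j
    have hne' : (ρ':ℝ)^j ≠ 0 := by positivity
    have h1 : ‖b j‖ * ρ^j = (‖b j‖ * ρ'^j) * q^j := by
      rw [hqdef, div_pow]
      field_simp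
    rw [h1]
    exact mul_le_mul_of_nonneg_right (hbb j) (by positivity)
  have hsum_h : ∀ y : ℂ, ‖y‖ ≤ ρ → HasSum (fun j => b j * y ^ j) ((g y)⁻¹) := by
    intro y hy
    have hyball : y ∈ Metric.eball (0:ℂ) RN := by
      rw [Metric.mem_eball, edist_zero_right]
      have h2 : ‖y‖ < Rr := lt_of_le_of_lt hy hρRr
      rw [← hRNR] at h2
      exact_mod_cast h2
    have h1 := HP.hasSum hyball
    rw [zero_add] at h1
    simpa [hh, hbdef, FormalMultilinearSeries.apply_eq_pow_smul_coeff, smul_eq_mul, mul_comm] using h1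
  have hpn_all : ∀ (x' : ℂ) (m : ℕ), p m x' = ∑ k ∈ Finset.range (m+1),
      x'^k / (k ! : ℂ) * b (m-k) := by
    intro x' m
    rw [hp m x' (RN:ℝ) (by exact_mod_cast hRN0) (by rw [hRNR]; exact hRrr0)]
    simp only [hbdef, hPdef, hh]
    exact appell_coeff g hg RN hRN0 hgz' x' m
  clear_value RN P h b
  obtain ⟨G, hG⟩ := (isCompact_closedBall (0:ℂ) ρ).exists_bound_of_continuousOn
    hg.continuous.continuousOn
  have hG0 : 0 ≤ G := le_trans (norm_nonneg _) (hG 0 (Metric.mem_closedBall_self hρpos.le))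
  have hS2sum : Summable (fun j : ℕ => ((j:ℝ)^2 + 1) * q^j) := by
    have h1 : Summable (fun j : ℕ => (j:ℝ)^2 * q^j) := by
      have h2 := summable_pow_mul_geometric_of_norm_lt_one (R := ℝ) 2
        (by rwa [Real.norm_eq_abs, abs_of_nonneg hqpos.le] : ‖q‖ < 1)
      simpa using h2
    have h2 : Summable (fun j : ℕ => q^j) := summable_geometric_of_lt_one hqpos.le hqlt
    simpa [add_mul] using h1.add h2
  set S2 : ℝ := ∑' j : ℕ, ((j:ℝ)^2 + 1) * q^j with hS2def
  have hS2nonneg : 0 ≤ S2 := tsum_nonneg fun j => by positivity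
  set C : ℝ := max (G * (C0 * S2 + C0/(1-q)^2)) 1 with hCdef
  refine ⟨C, lt_of_lt_of_le one_pos (le_max_right _ _), ?_⟩
  intro n hn x hx
  have hxabs : 0 < ‖x‖ := habs_pos x hx
  have hx_ne : x ≠ 0 := by
    intro h0; rw [h0] at hxabs; simp at hxabs
  have hyρ : ‖1/x‖ ≤ ρ := hyle x hx
  have gy_ne : g (1/x) ≠ 0 := hgne _ (lt_of_le_of_lt hyρ hρlt)
  refine ⟨gy_ne, ?_⟩
  set y : ℂ := 1/x with hydef
  have hnpos : (0:ℝ) < n := by exact_mod_cast hn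
  have hn1 : 1 ≤ n := hn
  have hpn := hpn_all ((n:ℂ)*x) n
  have hpn2 : p n ((n:ℂ)*x) = ∑ j ∈ Finset.range (n+1),
      ((n:ℂ)*x)^(n-j) / ((n-j)! : ℂ) * b j := by
    rw [hpn, ← Finset.sum_range_reflect (fun j => ((n:ℂ)*x)^(n-j) / ((n-j)! : ℂ) * b j) (n+1)]
    apply Finset.sum_congr rfl
    intro k hk
    have hk' : k ≤ n := Nat.lt_succ_iff.1 (Finset.mem_range.1 hk)
    beta_reduce
    have h1 : n + 1 - 1 - k = n - k := by omega
    have h2 : n - (n - k) = k := by omega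
    rw [h1, h2]
  have hdc : ∀ j, j ≤ n → ((dnk n j : ℝ) : ℂ) =
      (Real.sqrt (2*Real.pi*n) : ℂ) * ((n:ℂ)^(n-j) * Complex.exp (-(n:ℂ))) / ((n-j)! : ℂ) := by
    intro j hj
    rw [dnk]
    push_cast [Complex.ofReal_exp]
    ring
  have hE : (Complex.exp 1 * x)^n = Complex.exp (n:ℂ) * x^n := by
    rw [mul_pow, ← Complex.exp_nat_mul, mul_one]
  have hmain : (Real.sqrt (2*Real.pi*n) : ℂ) * p n ((n:ℂ)*x) * g y / (Complex.exp 1 * x)^n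
      = g y * ∑ j ∈ Finset.range (n+1), b j * y^j * ((dnk n j : ℝ) : ℂ) := by
    rw [hpn2, hE, Finset.mul_sum, Finset.mul_sum, Finset.sum_mul, Finset.sum_div]
    apply Finset.sum_congr rfl
    intro j hj
    have hj' : j ≤ n := Nat.lt_succ_iff.1 (Finset.mem_range.1 hj)
    have hxx : x^n = x^(n-j) * x^j := by
      rw [← pow_add]; congr 1; omega
    rw [hdc j hj', hydef, mul_pow, Complex.exp_neg, div_pow, one_pow, hxx]
    have hfne : ((n-j)! : ℂ) ≠ 0 := Nat.cast_ne_zero.2 (Nat.factorial_ne_zero _)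
    field_simp [Complex.exp_ne_zero, hx_ne, hfne]
  have h1eq : (1:ℂ) = g y * ∑' j, b j * y^j := by
    rw [(hsum_h y hyρ).tsum_eq, mul_inv_cancel₀ gy_ne]
  have hsummable : Summable (fun j => b j * y^j) := (hsum_h y hyρ).summable
  have hsplit : (∑ j ∈ Finset.range (n+1), b j * y^j) + ∑' j, b (j+(n+1)) * y^(j+(n+1))
      = ∑' j, b j * y^j := hsummable.sum_add_tsum_nat_add (n+1)
  set T2 : ℂ := ∑' j, b (j+(n+1)) * y^(j+(n+1)) with hT2def
  have hsum3 : ∑ j ∈ Finset.range (n+1), b j * y^j * (((dnk n j : ℝ):ℂ) - 1)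
      = (∑ j ∈ Finset.range (n+1), b j * y^j * ((dnk n j : ℝ):ℂ))
        - ∑ j ∈ Finset.range (n+1), b j * y^j := by
    rw [← Finset.sum_sub_distrib]
    apply Finset.sum_congr rfl
    intro j _
    ring
  have hdiff : (Real.sqrt (2*Real.pi*n) : ℂ) * p n ((n:ℂ)*x) * g y / (Complex.exp 1 * x)^n - 1
      = g y * ((∑ j ∈ Finset.range (n+1), b j * y^j * (((dnk n j : ℝ):ℂ) - 1)) - T2) := by
    rw [hmain]
    conv_lhs => rw [h1eq]
    rw [← hsplit, ← mul_sub]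
    congr 1
    rw [hsum3, hT2def]
    ring
  -- individual bounds
  have habsy : ∀ j : ℕ, ‖b j * y^j‖ ≤ C0 * q^j := by
    intro j
    rw [norm_mul, norm_pow]
    calc ‖b j‖ * ‖y‖^j ≤ ‖b j‖ * ρ^j := by
          apply mul_le_mul_of_nonneg_left ?_ (norm_nonneg _)
          apply pow_le_pow_left₀ (norm_nonneg _)
          exact hyρ
      _ ≤ C0 * q^j := hbq j
  have hdnkabs : ∀ j, j ≤ n → ‖((dnk n j : ℝ):ℂ) - 1‖ ≤ ((j:ℝ)^2+1)/n := by
    intro j hj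
    have h1 : (((dnk n j : ℝ):ℂ) - 1) = ((dnk n j - 1 : ℝ) : ℂ) := by push_cast; ring
    rw [h1, Complex.norm_real, Real.norm_eq_abs]
    rw [abs_le]
    constructor
    · have := dnk_ge hj hn1
      linarith
    · have h2 := dnk_le_one hj hn1
      have h3 : (0:ℝ) ≤ ((j:ℝ)^2+1)/n := by positivity
      linarith
  have hT1 : ‖∑ j ∈ Finset.range (n+1), b j * y^j * (((dnk n j : ℝ):ℂ) - 1)‖
      ≤ C0/n * S2 := by
    calc ‖∑ j ∈ Finset.range (n+1), b j * y^j * (((dnk n j : ℝ):ℂ) - 1)‖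
        ≤ ∑ j ∈ Finset.range (n+1), ‖b j * y^j * (((dnk n j : ℝ):ℂ) - 1)‖ := by
          simpa only [] using norm_sum_le (Finset.range (n+1))
            (fun j => b j * y^j * (((dnk n j : ℝ):ℂ) - 1))
      _ ≤ ∑ j ∈ Finset.range (n+1), C0 * q^j * (((j:ℝ)^2+1)/n) := by
          apply Finset.sum_le_sum
          intro j hj
          have hj' : j ≤ n := Nat.lt_succ_iff.1 (Finset.mem_range.1 hj)
          rw [norm_mul]
          apply mul_le_mul ?_ (hdnkabs j hj') (norm_nonneg _) (by positivity)
          exact habsy j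
      _ = C0/n * ∑ j ∈ Finset.range (n+1), ((j:ℝ)^2+1) * q^j := by
          rw [Finset.mul_sum]
          apply Finset.sum_congr rfl
          intro j _
          ring
      _ ≤ C0/n * S2 := by
          apply mul_le_mul_of_nonneg_left ?_ (by positivity)
          exact hS2sum.sum_le_tsum (Finset.range (n+1)) (fun j _ => by positivity)
  have hnormsum : Summable (fun j : ℕ => ‖b j * y^j‖) := by
    apply Summable.of_nonneg_of_le (fun j => norm_nonneg _) habsy
    exact (summable_geometric_of_lt_one hqpos.le hqlt).mul_left C0
  have hT2bound : ‖T2‖ ≤ C0 * q^(n+1) / (1-q) := by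
    rw [hT2def]
    have hshift : Summable (fun j : ℕ => ‖b (j+(n+1)) * y^(j+(n+1))‖) :=
      (summable_nat_add_iff (n+1)).2 hnormsum
    refine (norm_tsum_le_tsum_norm hshift).trans ?_
    have hmaj : Summable (fun j : ℕ => C0 * q^(j+(n+1))) := by
      apply Summable.congr (((summable_geometric_of_lt_one hqpos.le hqlt).mul_left
        (C0 * q^(n+1))))
      intro j
      rw [pow_add]; ring
    refine (Summable.tsum_le_tsum (fun j => habsy (j+(n+1))) hshift hmaj).trans ?_
    have h5 : (fun j : ℕ => C0 * q^(j+(n+1))) = fun j => (C0 * q^(n+1)) * q^j := by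
      funext j; rw [pow_add]; ring
    rw [h5, tsum_mul_left, tsum_geometric_of_lt_one hqpos.le hqlt]
    rw [div_eq_mul_inv]
  have hqn : q^(n+1) ≤ 1/((1-q)*n) := by
    have h1q : (-2:ℝ) ≤ 1/q - 1 := by
      have : (0:ℝ) < 1/q := by positivity
      linarith
    have hA := one_add_mul_le_pow h1q n
    have hqq : q^n * (1+(1/q-1))^n = 1 := by
      have : (1+(1/q-1)) = 1/q := by ring
      rw [this, ← mul_pow]
      field_simp
      exact one_pow n
    have hApos : (0:ℝ) < q^n := pow_pos hqpos n
    have h2 : q^n * ((n:ℝ)*(1-q)) ≤ 1 := by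
      have h3 : (n:ℝ)*(1-q) ≤ 1 + (n:ℝ)*(1/q-1) := by
        have h4 : (1-q) ≤ 1/q - 1 := by
          rw [div_sub' hqpos.ne']
          rw [le_div_iff₀ hqpos]
          nlinarith
        nlinarith [hnpos]
      calc q^n * ((n:ℝ)*(1-q)) ≤ q^n * (1 + (n:ℝ)*(1/q-1)) := by
            apply mul_le_mul_of_nonneg_left h3 hApos.le
        _ ≤ q^n * (1+(1/q-1))^n := by
            apply mul_le_mul_of_nonneg_left hA hApos.le
        _ = 1 := hqq
    have h1mq : (0:ℝ) < 1-q := by linarith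
    rw [le_div_iff₀ (mul_pos h1mq hnpos)]
    have h6 : q^(n+1) ≤ q^n := by
      apply pow_le_pow_of_le_one hqpos.le hqlt.le (Nat.le_succ n)
    calc q^(n+1) * ((1-q)*n) ≤ q^n * ((1-q)*n) :=
          mul_le_mul_of_nonneg_right h6 (mul_nonneg h1mq.le hnpos.le)
      _ = q^n * ((n:ℝ)*(1-q)) := by ring
      _ ≤ 1 := h2
  have hGy : ‖g y‖ ≤ G := by
    have h7 := hG y (by rw [Metric.mem_closedBall, Complex.dist_eq, sub_zero]; exact hyρ)
    exact h7
  calc ‖(Real.sqrt (2*Real.pi*n) : ℂ) * p n ((n:ℂ)*x) * g y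
        / (Complex.exp 1 * x)^n - 1‖
      = ‖g y‖ * ‖(∑ j ∈ Finset.range (n+1), b j * y^j * (((dnk n j : ℝ):ℂ) - 1)) - T2‖ := by
        rw [hdiff, norm_mul]
    _ ≤ G * (C0/n * S2 + C0 * q^(n+1)/(1-q)) := by
        apply mul_le_mul hGy ?_ (norm_nonneg _) hG0
        refine le_trans (by
          simpa only [] using norm_sub_le
            (∑ j ∈ Finset.range (n+1), b j * y^j * (((dnk n j : ℝ):ℂ) - 1)) T2) ?_
        exact add_le_add hT1 hT2bound
    _ ≤ C/n := by
        have h1mq : (0:ℝ) < 1-q := by linarith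
        have hq1 : C0 * q^(n+1)/(1-q) ≤ C0/((1-q)^2 * n) := by
          calc C0 * q^(n+1)/(1-q) ≤ C0 * (1/((1-q)*n))/(1-q) :=
                (div_le_div_iff_of_pos_right h1mq).2 (mul_le_mul_of_nonneg_left hqn hC0pos.le)
            _ = C0/((1-q)^2*n) := by
                rw [mul_one_div, div_div]
                congr 1
                ring
        have h8 : G * (C0/n*S2 + C0*q^(n+1)/(1-q)) ≤ (G*(C0*S2 + C0/(1-q)^2))/n := by
          calc G * (C0/n*S2 + C0*q^(n+1)/(1-q)) ≤ G * (C0/n*S2 + C0/((1-q)^2*n)) :=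
                mul_le_mul_of_nonneg_left (add_le_add_right hq1 _) hG0
            _ = (G*(C0*S2 + C0/(1-q)^2))/n := by
                field_simp
        refine h8.trans ?_
        rw [hCdef]
        exact (div_le_div_iff_of_pos_right hnpos).2 (le_max_left _ _)
end

section
/- For every compact subset K of {x ∈ ℂ : |x| > 1/r_0} and every η > 0 there exists N such that for all integers n ≥ N and all x ∈ K, p_n(n x) ≠ 0 and | (1/n) · ln | √(2πn) · p_n(n x) / (e x)^n | | < η; that is, (1/n) ln |√(2πn) p_n(n x)/(e x)^n| → 0 uniformly on compact subsets of the complement of the closed disk of radius 1/r_0 centered at 0. -/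
open Finset Metric
open scoped ENNReal NNReal

noncomputable def Complex.abs : AbsoluteValue ℂ ℝ := IsAbsoluteValue.toAbsoluteValue (norm : ℂ → ℝ)

theorem Complex.norm_eq_abs (z : ℂ) : ‖z‖ = Complex.abs z := rfl

theorem Complex.abs_ofReal (x : ℝ) : Complex.abs (x : ℂ) = |x| := by
  rw [← Complex.norm_eq_abs, Complex.norm_real, Real.norm_eq_abs]

theorem Complex.abs_natCast (n : ℕ) : Complex.abs (n : ℂ) = n := by
  rw [← Complex.norm_eq_abs, Complex.norm_natCast]

theorem Complex.abs_exp (z : ℂ) : Complex.abs (Complex.exp z) = Real.exp z.re := by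
  rw [← Complex.norm_eq_abs, Complex.norm_exp]

theorem Complex.continuous_abs : Continuous Complex.abs := continuous_norm

private lemma desc_aux (n k : ℕ) : n ^ (k + 1) ≤ n * n.descFactorial k + k ^ 2 * n ^ k := by
  induction k with
  | zero => simp
  | succ k ih =>
    by_cases hk : k ≤ n
    · have hd : n * n.descFactorial k = n.descFactorial (k + 1) + k * n.descFactorial k := by
        rw [Nat.descFactorial_succ]
        have : (n - k) * n.descFactorial k + k * n.descFactorial k = n * n.descFactorial k := by
          rw [← Nat.add_mul]; congr 1; omega
        omega
      have hdk : n.descFactorial k ≤ n ^ k := Nat.descFactorial_le_pow n k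
      calc n ^ (k + 2) = n * n ^ (k + 1) := by ring
        _ ≤ n * (n * n.descFactorial k + k ^ 2 * n ^ k) := Nat.mul_le_mul_left n ih
        _ = n * n.descFactorial (k+1) + n * (k * n.descFactorial k) + k ^ 2 * n ^ (k+1) := by
            rw [hd]; ring
        _ ≤ n * n.descFactorial (k+1) + n * (k * n ^ k) + k ^ 2 * n ^ (k+1) := by
            gcongr
        _ = n * n.descFactorial (k+1) + (k^2 + k) * n ^ (k+1) := by ring
        _ ≤ n * n.descFactorial (k+1) + (k + 1) ^ 2 * n ^ (k + 1) := by
            have h2 : k^2 + k ≤ (k+1)^2 := by nlinarith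
            exact Nat.add_le_add_left (Nat.mul_le_mul_right _ h2) _
    · have hn : n ≤ (k+1)^2 := by nlinarith [Nat.not_le.mp hk]
      calc n ^ (k + 2) = n * n ^ (k + 1) := by ring
        _ ≤ (k+1)^2 * n ^ (k+1) := Nat.mul_le_mul_right _ hn
        _ ≤ n * n.descFactorial (k+1) + (k + 1) ^ 2 * n ^ (k + 1) := Nat.le_add_left _ _

private lemma T_bound (n k : ℕ) (hn : 0 < n) :
    1 - (n.descFactorial k : ℝ) / (n : ℝ) ^ k ≤ (k : ℝ) ^ 2 / n := by
  have hnR : (0:ℝ) < (n:ℝ) := by exact_mod_cast hn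
  have hnk : (0:ℝ) < (n:ℝ) ^ k := by positivity
  have key : (n:ℝ) ^ (k+1) ≤ n * n.descFactorial k + k ^ 2 * (n:ℝ) ^ k := by
    exact_mod_cast desc_aux n k
  have h1 : (1:ℝ) ≤ (n.descFactorial k : ℝ) / (n:ℝ) ^ k + (k:ℝ) ^ 2 / n := by
    have e1 : (1:ℝ) = (n:ℝ)^(k+1) / (n:ℝ)^(k+1) := (div_self (by positivity)).symm
    rw [e1]
    have e2 : ((n:ℝ) * n.descFactorial k + k ^ 2 * (n:ℝ) ^ k) / (n:ℝ)^(k+1)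
        = (n.descFactorial k : ℝ) / (n:ℝ) ^ k + (k:ℝ) ^ 2 / n := by
      rw [pow_succ]; field_simp; ring
    rw [← e2]
    gcongr
  linarith

private lemma T_le_one (n k : ℕ) (hn : 0 < n) :
    (n.descFactorial k : ℝ) / (n : ℝ) ^ k ≤ 1 := by
  have hnk : (0:ℝ) < (n:ℝ) ^ k := by positivity
  rw [div_le_one hnk]
  exact_mod_cast Nat.descFactorial_le_pow n k

private lemma stirling_bounds (n : ℕ) (hn : 1 ≤ n) :
    Real.sqrt Real.pi ≤ Stirling.stirlingSeq n ∧
      Stirling.stirlingSeq n ≤ Real.exp 1 / Real.sqrt 2 := by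
  obtain ⟨m, rfl⟩ : ∃ m, n = m + 1 := ⟨n - 1, by omega⟩
  constructor
  · refine le_of_tendsto Stirling.tendsto_stirlingSeq_sqrt_pi ?_
    filter_upwards [Filter.eventually_ge_atTop (m+1)] with k hk
    obtain ⟨j, rfl⟩ : ∃ j, k = j + 1 := ⟨k - 1, by omega⟩
    exact Stirling.stirlingSeq'_antitone (by omega : m ≤ j)
  · have := Stirling.stirlingSeq'_antitone (Nat.zero_le m)
    simpa [Stirling.stirlingSeq_one] using this



private lemma cauchy_coeff_facts (g : ℂ → ℂ) (hg : Differentiable ℂ g) {r : ℝ} (hr : 0 < r)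
    (hgne : ∀ t : ℂ, Complex.abs t ≤ r → g t ≠ 0) :
    (∀ y : ℂ, Complex.abs y < r →
      HasSum (fun k => (cauchyPowerSeries (fun t => (g t)⁻¹) 0 r).coeff k * y ^ k) ((g y)⁻¹)) ∧
    (∀ s : ℝ, 0 ≤ s → s < r → ∃ C > 0, ∀ k : ℕ,
      ‖(cauchyPowerSeries (fun t => (g t)⁻¹) 0 r).coeff k‖ * s ^ k ≤ C) ∧
    (∀ s : ℝ, 0 ≤ s → s < r → Summable (fun k : ℕ =>
      ‖(cauchyPowerSeries (fun t => (g t)⁻¹) 0 r).coeff k‖ * s ^ k)) := by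
  set G : ℂ → ℂ := fun t => (g t)⁻¹ with hGdef
  set R : NNReal := r.toNNReal with hRdef
  have hRr : (R : ℝ) = r := Real.coe_toNNReal r hr.le
  have hRpos : 0 < R := by
    rw [← NNReal.coe_pos, hRr]; exact hr
  have hGdiff : DifferentiableOn ℂ G (closedBall (0:ℂ) R) := by
    intro t ht
    have ht' : Complex.abs t ≤ r := by
      rw [mem_closedBall, Complex.dist_eq, sub_zero, hRr] at ht; exact ht
    exact ((hg t).inv (hgne t ht')).differentiableWithinAt
  have hGps : HasFPowerSeriesOnBall G (cauchyPowerSeries G 0 R) 0 R :=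
    hGdiff.hasFPowerSeriesOnBall hRpos
  rw [hRr] at hGps
  refine ⟨?_, ?_, ?_⟩
  · intro y hy
    have hmem : y ∈ Metric.eball (0:ℂ) R := by
      rw [Metric.emetric_ball_nnreal, mem_ball, Complex.dist_eq, sub_zero, hRr]
      exact hy
    have H := hGps.hasSum hmem
    rw [zero_add] at H
    have he : (fun n => (cauchyPowerSeries G 0 r) n fun _ => y)
        = fun k => (cauchyPowerSeries G 0 r).coeff k * y ^ k := by
      funext k
      rw [FormalMultilinearSeries.apply_eq_pow_smul_coeff, smul_eq_mul, mul_comm]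
    rw [he] at H
    exact H
  · intro s hs0 hsr
    have hlt : (s.toNNReal : ℝ≥0∞) < (cauchyPowerSeries G 0 r).radius := by
      refine lt_of_lt_of_le ?_ hGps.r_le
      rw [ENNReal.coe_lt_coe, ← NNReal.coe_lt_coe, Real.coe_toNNReal _ hs0, hRr]
      exact hsr
    obtain ⟨C, hC0, hC⟩ := (cauchyPowerSeries G 0 r).norm_mul_pow_le_of_lt_radius hlt
    refine ⟨C, hC0, fun k => ?_⟩
    have := hC k
    rwa [FormalMultilinearSeries.norm_apply_eq_norm_coef,
      Real.coe_toNNReal _ hs0] at this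
  · intro s hs0 hsr
    have hlt : (s.toNNReal : ℝ≥0∞) < (cauchyPowerSeries G 0 r).radius := by
      refine lt_of_lt_of_le ?_ hGps.r_le
      rw [ENNReal.coe_lt_coe, ← NNReal.coe_lt_coe, Real.coe_toNNReal _ hs0, hRr]
      exact hsr
    have := (cauchyPowerSeries G 0 r).summable_norm_mul_pow hlt
    rw [Real.coe_toNNReal _ hs0] at this
    refine this.congr fun k => ?_
    rw [FormalMultilinearSeries.norm_apply_eq_norm_coef]



private lemma hasSum_exp_div (z : ℂ) :
    HasSum (fun j : ℕ => z ^ j / (j.factorial : ℂ)) (Complex.exp z) := by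
  rw [Complex.exp_eq_exp_ℂ]
  exact NormedSpace.expSeries_div_hasSum_exp z

private lemma summable_norm_exp_div (z : ℂ) :
    Summable fun j : ℕ => ‖z ^ j / (j.factorial : ℂ)‖ := by
  refine (Real.summable_pow_div_factorial ‖z‖).congr fun j => ?_
  rw [norm_div, norm_pow, Complex.norm_natCast]

private lemma appell_coeff_eq (g : ℂ → ℂ) (hg : Differentiable ℂ g) {r : ℝ} (hr : 0 < r)
    (hgne : ∀ t : ℂ, Complex.abs t ≤ r → g t ≠ 0) (x : ℂ) (n : ℕ) :
    (1 / (2 * (Real.pi : ℂ) * Complex.I)) *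
        (∮ t in C(0, r), Complex.exp (x * t) / (g t * t ^ (n + 1))) =
      ∑ k ∈ Finset.range (n + 1),
        (cauchyPowerSeries (fun t => (g t)⁻¹) 0 r).coeff k * x ^ (n - k) /
          ((n - k).factorial : ℂ) := by
  obtain ⟨hGsum, hCb, hCs⟩ := cauchy_coeff_facts g hg hr hgne
  set G : ℂ → ℂ := fun t => (g t)⁻¹ with hGdef
  set c : ℕ → ℂ := fun k => (cauchyPowerSeries G 0 r).coeff k with hcdef
  set q : ℕ → ℂ := fun m => ∑ k ∈ Finset.range (m + 1),
      c k * x ^ (m - k) / ((m - k).factorial : ℂ) with hqdef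
  set h : ℂ → ℂ := fun t => Complex.exp (x * t) / g t with hhdef
  -- rearrangement identity
  have hrearr : ∀ (y : ℂ) (m : ℕ), q m * y ^ m
      = ∑ k ∈ Finset.range (m + 1), (c k * y ^ k) *
          ((x * y) ^ (m - k) / (((m - k).factorial : ℂ))) := by
    intro y m
    rw [hqdef, Finset.sum_mul]
    refine Finset.sum_congr rfl fun k hk => ?_
    have hk' : k ≤ m := Nat.lt_succ_iff.mp (Finset.mem_range.mp hk)
    have hy : y ^ k * y ^ (m - k) = y ^ m := by
      rw [← pow_add]; congr 1; omega
    rw [mul_pow, ← hy]; ring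
  -- summability of c-norm series
  have hf : ∀ y : ℂ, Complex.abs y < r → Summable fun k => ‖c k * y ^ k‖ := by
    intro y hy
    refine (hCs (Complex.abs y) (Complex.abs.nonneg y) hy).congr fun k => ?_
    simp [norm_mul, norm_pow, Complex.norm_eq_abs, hcdef]
  -- the product has sum
  have hprod : ∀ y : ℂ, Complex.abs y < r →
      HasSum (fun m => q m * y ^ m) (h y) := by
    intro y hy
    have H := hasSum_sum_range_mul_of_summable_norm (hf y hy) (summable_norm_exp_div (x * y))
    rw [(hGsum y hy).tsum_eq, (hasSum_exp_div (x * y)).tsum_eq] at H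
    have hGy : (g y)⁻¹ * Complex.exp (x * y) = h y := by
      show _ = Complex.exp (x * y) / g y
      rw [div_eq_mul_inv, mul_comm]
    rw [hGy] at H
    refine H.congr_fun fun m => hrearr y m
  -- the formal series Q
  set Q := FormalMultilinearSeries.ofScalars ℂ q with hQdef
  set s : NNReal := (r / 2).toNNReal with hsdef
  have hsr : (s : ℝ) = r / 2 := Real.coe_toNNReal _ (by linarith)
  have hsltr : (s : ℝ) < r := by rw [hsr]; linarith
  have habs : Complex.abs ((r / 2 : ℝ) : ℂ) < r := by
    rw [Complex.abs_ofReal, abs_of_nonneg (by linarith)]; linarith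
  have hQrad : (s : ℝ≥0∞) ≤ Q.radius := by
    apply FormalMultilinearSeries.le_radius_of_summable
    have H := summable_norm_sum_mul_range_of_summable_norm
      (hf ((r / 2 : ℝ) : ℂ) habs) (summable_norm_exp_div (x * ((r / 2 : ℝ) : ℂ)))
    refine H.congr fun m => ?_
    rw [← hrearr ((r / 2 : ℝ) : ℂ) m, norm_mul, norm_pow, Complex.norm_real,
      Real.norm_of_nonneg (by linarith), hsr, hQdef,
      FormalMultilinearSeries.ofScalars_norm]
  have hQps : HasFPowerSeriesOnBall h Q 0 s := by
    refine ⟨hQrad, ?_, ?_⟩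
    · rw [ENNReal.coe_pos, ← NNReal.coe_pos, hsr]; linarith
    · intro y hy
      rw [Metric.emetric_ball_nnreal, mem_ball, dist_zero_right, Complex.norm_eq_abs] at hy
      have hy' : Complex.abs y < r := lt_trans (by rw [← hsr] at *; exact hy) hsltr
      rw [zero_add]
      refine (hprod y hy').congr_fun fun m => ?_
      rw [hQdef, FormalMultilinearSeries.ofScalars_apply_eq, smul_eq_mul]
  -- Cauchy power series of h
  set R : NNReal := r.toNNReal with hRdef
  have hRr : (R : ℝ) = r := Real.coe_toNNReal r hr.le
  have hRpos : 0 < R := by rw [← NNReal.coe_pos, hRr]; exact hr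
  have hhdiff : DifferentiableOn ℂ h (closedBall (0:ℂ) R) := by
    intro t ht
    have ht' : Complex.abs t ≤ r := by
      rw [mem_closedBall, Complex.dist_eq, sub_zero, hRr] at ht; exact ht
    exact (((differentiableAt_id.const_mul x).cexp).div (hg t) (hgne t ht')).differentiableWithinAt
  have hhps : HasFPowerSeriesOnBall h (cauchyPowerSeries h 0 R) 0 R :=
    hhdiff.hasFPowerSeriesOnBall hRpos
  rw [hRr] at hhps
  have heq : cauchyPowerSeries h 0 r = Q :=
    hhps.hasFPowerSeriesAt.eq_formalMultilinearSeries hQps.hasFPowerSeriesAt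
  -- extract coefficient n
  have hcoeff : (cauchyPowerSeries h 0 r).coeff n = q n := by
    rw [heq, FormalMultilinearSeries.coeff, hQdef]
    have := FormalMultilinearSeries.ofScalars_apply_eq (E := ℂ) (c := q) (1 : ℂ) n
    simpa [Pi.one_def] using this
  -- compute the coefficient as the integral
  have hint : (fun z : ℂ => (1 / (z - 0) : ℂ) ^ n • (z - 0)⁻¹ • h z)
      = fun z : ℂ => Complex.exp (x * z) / (g z * z ^ (n + 1)) := by
    funext z
    simp only [sub_zero, smul_eq_mul, one_div, hhdef]
    rcases eq_or_ne z 0 with rfl | hz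
    · simp [pow_succ]
    rcases eq_or_ne (g z) 0 with hgz | hgz
    · simp [hgz]
    · field_simp
      rw [one_div, inv_pow, pow_succ, ← mul_assoc, inv_mul_cancel₀ (pow_ne_zero n hz), one_mul]
  have happly := cauchyPowerSeries_apply h 0 r n 1
  calc (1 / (2 * (Real.pi : ℂ) * Complex.I)) *
        (∮ t in C(0, r), Complex.exp (x * t) / (g t * t ^ (n + 1)))
      = (2 * (Real.pi : ℂ) * Complex.I)⁻¹ •
        (∮ z in C(0, r), (1 / (z - 0) : ℂ) ^ n • (z - 0)⁻¹ • h z) := by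
        rw [hint, smul_eq_mul, one_div]
    _ = (cauchyPowerSeries h 0 r).coeff n := happly.symm
    _ = q n := hcoeff

private lemma stirling_scalar (n : ℕ) (hn : 1 ≤ n) (a s : ℝ) (ha : 0 < a) :
    Real.sqrt (2 * Real.pi * n) * (((n : ℝ) * a) ^ n / (n.factorial : ℝ) * s) /
        (Real.exp 1 * a) ^ n
      = (Real.sqrt Real.pi / Stirling.stirlingSeq n) * s := by
  have hst : Stirling.stirlingSeq n
      = (n.factorial : ℝ) / (Real.sqrt (2 * n) * ((n : ℝ) / Real.exp 1) ^ n) := rfl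
  have h2 : Real.sqrt (2 * Real.pi * n) = Real.sqrt Real.pi * Real.sqrt (2 * n) := by
    rw [← Real.sqrt_mul Real.pi_pos.le]
    congr 1
    ring
  have hnpos : (0 : ℝ) < n := by exact_mod_cast hn
  have hF : (0 : ℝ) < (n.factorial : ℝ) := by exact_mod_cast n.factorial_pos
  have hsq2n : (0 : ℝ) < Real.sqrt (2 * n) := Real.sqrt_pos.mpr (by positivity)
  have hexp : (0 : ℝ) < Real.exp 1 := Real.exp_pos 1
  rw [h2, hst]
  rw [mul_pow, mul_pow, div_pow]
  field_simp

set_option maxHeartbeats 1000000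

/-- With `g`, `r₀`, `p` as in the Appell setup, for every compact
`K ⊆ {|x| > 1/r₀}` and every `η > 0` there is `N` such that for all `n ≥ N` and
`x ∈ K`, `pₙ(nx) ≠ 0` and `|(1/n) ln|√(2πn) pₙ(nx)/(ex)^n|| < η`; i.e.
`(1/n) ln|√(2πn) pₙ(nx)/(ex)^n| → 0` uniformly on compact subsets of the
complement of the closed disk of radius `1/r₀`. -/
theorem stmt_5 (g : ℂ → ℂ) (hg : Differentiable ℂ g) (hg0 : g 0 ≠ 0)
    (r0 : ℝ) (hr0pos : 0 < r0)
    (hr0 : IsLeast {r : ℝ | ∃ a : ℂ, g a = 0 ∧ ‖a‖ = r} r0)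
    (p : ℕ → ℂ → ℂ)
    (hp : ∀ (n : ℕ) (x : ℂ) (ε : ℝ), 0 < ε → ε < r0 →
      p n x = (1 / (2 * (Real.pi : ℂ) * Complex.I)) *
        ∮ t in C(0, ε), Complex.exp (x * t) / (g t * t ^ (n + 1))) :
    ∀ (K : Set ℂ), IsCompact K → (∀ x ∈ K, 1 / r0 < ‖x‖) →
      ∀ η > (0 : ℝ), ∃ N : ℕ, ∀ n : ℕ, N ≤ n → ∀ x ∈ K,
        p n ((n : ℂ) * x) ≠ 0 ∧
        |(1 / n : ℝ) * Real.log ‖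
            ((Real.sqrt (2 * Real.pi * n) : ℂ) * p n ((n : ℂ) * x) /
              (Complex.exp 1 * x) ^ n)‖| < η := by
  intro K hK hKx η hη
  have hgne : ∀ t : ℂ, Complex.abs t < r0 → g t ≠ 0 := by
    intro t ht hgt
    exact absurd (hr0.2 ⟨t, hgt, rfl⟩) (not_le.mpr ht)
  rcases K.eq_empty_or_nonempty with rfl | hKne
  · exact ⟨0, by simp⟩
  obtain ⟨x₀, hx₀K, hx₀min'⟩ := hK.exists_isMinOn hKne Complex.continuous_abs.continuousOn
  have hx₀min : ∀ y ∈ K, Complex.abs x₀ ≤ Complex.abs y := fun y hy => isMinOn_iff.mp hx₀min' y hy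
  set m := Complex.abs x₀ with hmdef
  have hm0 : 1 / r0 < m := hKx x₀ hx₀K
  have hmpos : 0 < m := lt_trans (by positivity) hm0
  have hmr : 1 / m < r0 := by
    rw [div_lt_iff₀ hmpos]
    rw [div_lt_iff₀ hr0pos] at hm0
    nlinarith
  set ρ : ℝ := (1 / m + r0) / 2 with hρdef
  have hρ1 : 1 / m < ρ := by rw [hρdef]; linarith
  have hρ2 : ρ < r0 := by rw [hρdef]; linarith
  have hρpos : 0 < ρ := lt_trans (by positivity) hρ1
  set r : ℝ := (ρ + r0) / 2 with hrdef
  have hρr : ρ < r := by rw [hrdef]; linarith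
  have hrr0 : r < r0 := by rw [hrdef]; linarith
  have hrpos : 0 < r := by linarith
  have hgne' : ∀ t : ℂ, Complex.abs t ≤ r → g t ≠ 0 :=
    fun t ht => hgne t (lt_of_le_of_lt ht hrr0)
  obtain ⟨hGsum0, hCb, hCs0⟩ := cauchy_coeff_facts g hg hrpos hgne'
  set c : ℕ → ℂ := fun k => (cauchyPowerSeries (fun t => (g t)⁻¹) 0 r).coeff k with hcdef
  have hGsum : ∀ y : ℂ, Complex.abs y < r → HasSum (fun k => c k * y ^ k) ((g y)⁻¹) := hGsum0
  have hCs : ∀ s : ℝ, 0 ≤ s → s < r →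
      Summable (fun k : ℕ => Complex.abs (c k) * s ^ k) := by
    intro s h0 h1
    refine (hCs0 s h0 h1).congr fun k => ?_
    rw [Complex.norm_eq_abs]
  have hpq : ∀ (n : ℕ) (x : ℂ), p n x = ∑ k ∈ Finset.range (n + 1),
      c k * x ^ (n - k) / ((n - k).factorial : ℂ) := by
    intro n x
    rw [hp n x r hrpos hrr0]
    exact appell_coeff_eq g hg hrpos hgne' x n
  obtain ⟨C, hC0, hC1⟩ := hCb ρ hρpos.le hρr
  have hC : ∀ k : ℕ, Complex.abs (c k) * ρ ^ k ≤ C := by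
    intro k
    have := hC1 k
    rw [Complex.norm_eq_abs] at this
    exact this
  set t0 : ℝ := 1 / (m * ρ) with ht0def
  have ht0pos : 0 < t0 := by rw [ht0def]; positivity
  have ht0lt : t0 < 1 := by
    rw [ht0def, div_lt_one (by positivity)]
    rw [div_lt_iff₀ hmpos] at hρ1
    linarith
  have hbase : ρ * t0 = 1 / m := by
    have hm' : m ≠ 0 := hmpos.ne'
    have hρ' : ρ ≠ 0 := hρpos.ne'
    rw [ht0def]
    field_simp
  clear hGsum0 hCs0 hCb hC1
  clear_value m ρ r c t0
  -- basic facts about x ∈ K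
  have hxm : ∀ x ∈ K, m ≤ Complex.abs x := hx₀min
  have hxpos : ∀ x ∈ K, 0 < Complex.abs x := fun x hx => lt_of_lt_of_le hmpos (hxm x hx)
  have hxne : ∀ x ∈ K, x ≠ 0 := by
    intro x hx h0
    have := hxpos x hx
    rw [h0] at this
    simp at this
  have hux : ∀ x ∈ K, Complex.abs x⁻¹ ≤ 1 / m := by
    intro x hx
    rw [map_inv₀, one_div]
    exact inv_anti₀ hmpos (hxm x hx)
  have huxr : ∀ x ∈ K, Complex.abs x⁻¹ < r := by
    intro x hx
    calc Complex.abs x⁻¹ ≤ 1 / m := hux x hx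
      _ < ρ := hρ1
      _ < r := hρr
  have hterm : ∀ x ∈ K, ∀ k : ℕ, Complex.abs (c k) * Complex.abs x⁻¹ ^ k ≤ C * t0 ^ k := by
    intro x hx k
    calc Complex.abs (c k) * Complex.abs x⁻¹ ^ k
        ≤ Complex.abs (c k) * (1 / m) ^ k := by
          gcongr
          exact hux x hx
      _ = Complex.abs (c k) * (ρ * t0) ^ k := by rw [hbase]
      _ = (Complex.abs (c k) * ρ ^ k) * t0 ^ k := by rw [mul_pow]; ring
      _ ≤ C * t0 ^ k := by
          gcongr
          exact hC k
  -- the normalized sum S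
  set S : ℕ → ℂ → ℂ := fun n x => ∑ k ∈ Finset.range (n + 1),
      c k * x⁻¹ ^ k * ((n.descFactorial k : ℂ) / (n : ℂ) ^ k) with hSdef
  clear_value S
  -- the factorization of p n (n x)
  have hfact : ∀ n : ℕ, 1 ≤ n → ∀ x ∈ K,
      p n ((n : ℂ) * x) = ((n : ℂ) * x) ^ n / (n.factorial : ℂ) * S n x := by
    intro n hn x hx
    rw [hpq n ((n : ℂ) * x), hSdef]
    simp only
    rw [Finset.mul_sum]
    refine Finset.sum_congr rfl fun k hk => ?_
    have hk' : k ≤ n := Nat.lt_succ_iff.mp (Finset.mem_range.mp hk)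
    have hxne' : x ≠ 0 := hxne x hx
    have hnne : (n : ℂ) ≠ 0 := Nat.cast_ne_zero.mpr (by omega)
    have hfacts : ((n - k).factorial : ℂ) * (n.descFactorial k : ℂ) = (n.factorial : ℂ) := by
      exact_mod_cast congrArg (Nat.cast (R := ℂ)) (Nat.factorial_mul_descFactorial hk')
    have hw : ((n : ℂ) * x) ^ n = ((n : ℂ) * x) ^ (n - k) * ((n : ℂ) ^ k * x ^ k) := by
      rw [← mul_pow, ← pow_add]
      congr 1
      omega
    have hdne : (n.descFactorial k : ℂ) ≠ 0 :=
      by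
      rw [Ne, Nat.cast_eq_zero, Nat.descFactorial_eq_zero_iff_lt]
      omega
    have hfne : ((n - k).factorial : ℂ) ≠ 0 := Nat.cast_ne_zero.mpr (n - k).factorial_ne_zero
    rw [hw, ← hfacts]
    field_simp
    ring
    rw [mul_assoc, ← mul_pow, mul_inv_cancel₀ hxne', one_pow, mul_one]
  -- summability of k^2 t0^k
  have hsumk2 : Summable (fun k : ℕ => (k : ℝ) ^ 2 * t0 ^ k) := by
    have := summable_pow_mul_geometric_of_norm_lt_one (R := ℝ) 2 (r := t0)
      (by rw [Real.norm_of_nonneg ht0pos.le]; exact ht0lt)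
    exact this
  set B₂ : ℝ := ∑' k : ℕ, (k : ℝ) ^ 2 * t0 ^ k with hB₂def
  clear_value B₂
  -- summability of |c k| |u|^k
  have hcu : ∀ x ∈ K, Summable (fun k : ℕ => Complex.abs (c k * x⁻¹ ^ k)) := by
    intro x hx
    refine (hCs (Complex.abs x⁻¹) (Complex.abs.nonneg _) (huxr x hx)).congr fun k => ?_
    rw [map_mul, map_pow]
  -- the main estimate on S - (g x⁻¹)⁻¹
  set e : ℕ → ℝ := fun n => C * B₂ / n + C * t0 ^ n * (1 - t0)⁻¹ with hedef
  clear_value e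
  have hSest : ∀ n : ℕ, 1 ≤ n → ∀ x ∈ K,
      Complex.abs (S n x - (g x⁻¹)⁻¹) ≤ e n := by
    intro n hn x hx
    have hnpos : (0 : ℝ) < n := by exact_mod_cast hn
    have hsum := hGsum x⁻¹ (huxr x hx)
    have hsummable := hsum.summable
    have hsplit : (∑ k ∈ Finset.range (n + 1), c k * x⁻¹ ^ k)
        + ∑' k : ℕ, c (k + (n + 1)) * x⁻¹ ^ (k + (n + 1)) = ∑' k : ℕ, c k * x⁻¹ ^ k :=
      hsummable.sum_add_tsum_nat_add (n + 1)
    have hrepr : S n x - (g x⁻¹)⁻¹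
        = (∑ k ∈ Finset.range (n + 1), c k * x⁻¹ ^ k * ((n.descFactorial k : ℂ) / (n : ℂ) ^ k - 1))
          - ∑' k : ℕ, c (k + (n + 1)) * x⁻¹ ^ (k + (n + 1)) := by
      rw [← hsum.tsum_eq, ← hsplit, hSdef]
      simp only
      have : ∑ k ∈ Finset.range (n + 1),
          c k * x⁻¹ ^ k * ((n.descFactorial k : ℂ) / (n : ℂ) ^ k - 1)
          = ∑ k ∈ Finset.range (n + 1), (c k * x⁻¹ ^ k * ((n.descFactorial k : ℂ) / (n : ℂ) ^ k)
              - c k * x⁻¹ ^ k) := Finset.sum_congr rfl fun k _ => by ring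
      rw [this, Finset.sum_sub_distrib]
      ring
    rw [hrepr]
    have hhead : Complex.abs (∑ k ∈ Finset.range (n + 1),
        c k * x⁻¹ ^ k * ((n.descFactorial k : ℂ) / (n : ℂ) ^ k - 1)) ≤ C * B₂ / n := by
      refine le_trans (Complex.abs.sum_le _ _) ?_
      have hptwise : ∀ k ∈ Finset.range (n + 1),
          Complex.abs (c k * x⁻¹ ^ k * ((n.descFactorial k : ℂ) / (n : ℂ) ^ k - 1))
            ≤ (C / n) * ((k : ℝ) ^ 2 * t0 ^ k) := by
        intro k hk
        rw [map_mul, map_mul, map_pow]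
        have hTc : (n.descFactorial k : ℂ) / (n : ℂ) ^ k - 1
            = (((n.descFactorial k : ℝ) / (n : ℝ) ^ k - 1 : ℝ) : ℂ) := by
          push_cast
          ring
        rw [hTc, Complex.abs_ofReal,
          abs_of_nonpos (by linarith [T_le_one n k (by omega)]), neg_sub]
        have h1 : 1 - (n.descFactorial k : ℝ) / (n : ℝ) ^ k ≤ (k : ℝ) ^ 2 / n :=
          T_bound n k (by omega)
        have h2 : Complex.abs (c k) * Complex.abs x⁻¹ ^ k ≤ C * t0 ^ k := hterm x hx k
        have h3 : 0 ≤ 1 - (n.descFactorial k : ℝ) / (n : ℝ) ^ k := by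
          linarith [T_le_one n k (by omega)]
        calc Complex.abs (c k) * Complex.abs x⁻¹ ^ k
              * (1 - (n.descFactorial k : ℝ) / (n : ℝ) ^ k)
            ≤ (C * t0 ^ k) * ((k : ℝ) ^ 2 / n) := by
              refine mul_le_mul h2 h1 h3 (by positivity)
          _ = (C / n) * ((k : ℝ) ^ 2 * t0 ^ k) := by ring
      refine le_trans (Finset.sum_le_sum hptwise) ?_
      rw [← Finset.mul_sum]
      calc (C / n) * ∑ k ∈ Finset.range (n + 1), (k : ℝ) ^ 2 * t0 ^ k
          ≤ (C / n) * B₂ := by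
            refine mul_le_mul_of_nonneg_left ?_ (by positivity)
            rw [hB₂def]
            exact hsumk2.sum_le_tsum _ (fun k _ => by positivity)
        _ = C * B₂ / n := by ring
    have htailsummable : Summable (fun k : ℕ =>
        Complex.abs (c (k + (n + 1)) * x⁻¹ ^ (k + (n + 1)))) :=
      (summable_nat_add_iff (f := fun j : ℕ => Complex.abs (c j * x⁻¹ ^ j)) (n + 1)).mpr
        (hcu x hx)
    have hgeo : Summable (fun k : ℕ => C * t0 ^ (k + (n + 1))) := by
      refine ((summable_geometric_of_lt_one ht0pos.le ht0lt).mul_left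
        (C * t0 ^ (n + 1))).congr fun k => ?_
      rw [pow_add]
      ring
    have htail : Complex.abs (∑' k : ℕ, c (k + (n + 1)) * x⁻¹ ^ (k + (n + 1)))
        ≤ C * t0 ^ n * (1 - t0)⁻¹ := by
      have h5 : Complex.abs (∑' k : ℕ, c (k + (n + 1)) * x⁻¹ ^ (k + (n + 1)))
          ≤ ∑' k : ℕ, Complex.abs (c (k + (n + 1)) * x⁻¹ ^ (k + (n + 1))) := by
        have := norm_tsum_le_tsum_norm (f := fun k : ℕ => c (k + (n + 1)) * x⁻¹ ^ (k + (n + 1)))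
          (by refine htailsummable.congr fun k => ?_; rw [Complex.norm_eq_abs])
        rw [Complex.norm_eq_abs] at this
        refine le_trans this (le_of_eq (tsum_congr fun k => ?_))
        rw [Complex.norm_eq_abs]
      refine le_trans h5 ?_
      have h6 : ∑' k : ℕ, Complex.abs (c (k + (n + 1)) * x⁻¹ ^ (k + (n + 1)))
          ≤ ∑' k : ℕ, C * t0 ^ (k + (n + 1)) := by
        refine htailsummable.tsum_le_tsum (fun k => ?_) hgeo
        rw [map_mul, map_pow]
        exact hterm x hx (k + (n + 1))
      refine le_trans h6 ?_
      have h7 : ∑' k : ℕ, C * t0 ^ (k + (n + 1)) = C * t0 ^ (n + 1) * (1 - t0)⁻¹ := by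
        rw [tsum_congr (fun k : ℕ => by rw [pow_add]; ring :
            ∀ k : ℕ, C * t0 ^ (k + (n + 1)) = (C * t0 ^ (n + 1)) * t0 ^ k),
          tsum_mul_left, tsum_geometric_of_lt_one ht0pos.le ht0lt]
      rw [h7]
      have : t0 ^ (n + 1) ≤ t0 ^ n := by
        refine pow_le_pow_of_le_one ht0pos.le ht0lt.le (by omega)
      have hinv : (0:ℝ) < (1 - t0)⁻¹ := by
        rw [inv_pos]; linarith
      exact mul_le_mul_of_nonneg_right (mul_le_mul_of_nonneg_left this hC0.le) hinv.le
    calc Complex.abs ((∑ k ∈ Finset.range (n + 1),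
            c k * x⁻¹ ^ k * ((n.descFactorial k : ℂ) / (n : ℂ) ^ k - 1))
          - ∑' k : ℕ, c (k + (n + 1)) * x⁻¹ ^ (k + (n + 1)))
        ≤ Complex.abs (∑ k ∈ Finset.range (n + 1),
            c k * x⁻¹ ^ k * ((n.descFactorial k : ℂ) / (n : ℂ) ^ k - 1))
          + Complex.abs (∑' k : ℕ, c (k + (n + 1)) * x⁻¹ ^ (k + (n + 1))) := by
          rw [sub_eq_add_neg]
          refine le_trans (Complex.abs.add_le _ _) ?_
          rw [Complex.abs.map_neg]
      _ ≤ C * B₂ / n + C * t0 ^ n * (1 - t0)⁻¹ := add_le_add hhead htail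
      _ = e n := by rw [hedef]
  -- the upper bound on |S|
  set B : ℝ := C * (1 - t0)⁻¹ with hBdef
  clear_value B
  have hBpos : 0 < B := by
    rw [hBdef]
    have : (0:ℝ) < (1 - t0)⁻¹ := by rw [inv_pos]; linarith
    positivity
  have hSub : ∀ n : ℕ, 1 ≤ n → ∀ x ∈ K, Complex.abs (S n x) ≤ B := by
    intro n hn x hx
    rw [hSdef]
    simp only
    refine le_trans (Complex.abs.sum_le _ _) ?_
    have hptwise : ∀ k ∈ Finset.range (n + 1),
        Complex.abs (c k * x⁻¹ ^ k * ((n.descFactorial k : ℂ) / (n : ℂ) ^ k))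
          ≤ C * t0 ^ k := by
      intro k hk
      rw [map_mul, map_mul, map_pow]
      have hTc : (n.descFactorial k : ℂ) / (n : ℂ) ^ k
          = (((n.descFactorial k : ℝ) / (n : ℝ) ^ k : ℝ) : ℂ) := by push_cast; ring
      rw [hTc, Complex.abs_ofReal]
      have hT1 : |((n.descFactorial k : ℝ) / (n : ℝ) ^ k : ℝ)| ≤ 1 := by
        rw [abs_of_nonneg (by positivity)]
        exact T_le_one n k (by omega)
      calc Complex.abs (c k) * Complex.abs x⁻¹ ^ k
            * |((n.descFactorial k : ℝ) / (n : ℝ) ^ k : ℝ)|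
          ≤ (C * t0 ^ k) * 1 := by
            refine mul_le_mul (hterm x hx k) hT1 (abs_nonneg _) (by positivity)
        _ = C * t0 ^ k := by ring
    refine le_trans (Finset.sum_le_sum hptwise) ?_
    rw [hBdef, ← tsum_geometric_of_lt_one ht0pos.le ht0lt, ← tsum_mul_left]
    exact ((summable_geometric_of_lt_one ht0pos.le ht0lt).mul_left C).sum_le_tsum _
      (fun k _ => by positivity)
  -- δ : minimum of |(g x⁻¹)⁻¹| on K
  have hcont : ContinuousOn (fun x : ℂ => Complex.abs ((g x⁻¹)⁻¹)) K := by
    refine Complex.continuous_abs.comp_continuousOn (ContinuousOn.inv₀ ?_ ?_)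
    · exact hg.continuous.comp_continuousOn (ContinuousOn.inv₀ continuousOn_id hxne)
    · intro x hx
      exact hgne _ (lt_trans (huxr x hx) hrr0)
  obtain ⟨x₁, hx₁K, hx₁min'⟩ := hK.exists_isMinOn hKne hcont
  have hx₁min : ∀ y ∈ K, Complex.abs ((g x₁⁻¹)⁻¹) ≤ Complex.abs ((g y⁻¹)⁻¹) :=
    fun y hy => isMinOn_iff.mp hx₁min' y hy
  set δ : ℝ := Complex.abs ((g x₁⁻¹)⁻¹) with hδdef
  clear_value δ
  have hδpos : 0 < δ := by
    rw [hδdef]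
    rw [Complex.abs.pos_iff]
    exact inv_ne_zero (hgne _ (lt_trans (huxr x₁ hx₁K) hrr0))
  -- N₁ : e n < δ/2 eventually
  have htend : Filter.Tendsto e Filter.atTop (nhds 0) := by
    rw [hedef]
    have h1 := tendsto_const_div_atTop_nhds_zero_nat (C * B₂)
    have h2 := (tendsto_pow_atTop_nhds_zero_of_lt_one ht0pos.le ht0lt).const_mul C
    have h3 := h2.mul_const (1 - t0)⁻¹
    have := h1.add h3
    simpa using this
  obtain ⟨N₁, hN₁⟩ := Filter.eventually_atTop.mp (htend.eventually (gt_mem_nhds (half_pos hδpos)))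
  -- lower bound on |S|
  have hSlb : ∀ n : ℕ, 1 ≤ n → N₁ ≤ n → ∀ x ∈ K, δ / 2 ≤ Complex.abs (S n x) := by
    intro n hn hnN x hx
    have h1 : δ ≤ Complex.abs ((g x⁻¹)⁻¹) := hx₁min x hx
    have h2 : Complex.abs (S n x - (g x⁻¹)⁻¹) ≤ e n := hSest n hn x hx
    have h3 : e n < δ / 2 := hN₁ n hnN
    have h4 : Complex.abs ((g x⁻¹)⁻¹) - Complex.abs (S n x)
        ≤ Complex.abs (S n x - (g x⁻¹)⁻¹) := by
      have h5 := Complex.abs.abs_abv_sub_le_abv_sub ((g x⁻¹)⁻¹) (S n x)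
      rw [← neg_sub (S n x) ((g x⁻¹)⁻¹), Complex.abs.map_neg] at h5
      exact le_trans (le_abs_self _) h5
    linarith
  -- Stirling constants
  set γ : ℝ := Real.sqrt Real.pi / (Real.exp 1 / Real.sqrt 2) with hγdef
  clear_value γ
  have hγpos : 0 < γ := by
    rw [hγdef]
    have := Real.pi_pos
    have := Real.exp_pos 1
    positivity
  set α : ℝ := γ * (δ / 2) with hαdef
  clear_value α
  have hαpos : 0 < α := by rw [hαdef]; positivity
  set Γ : ℝ := |Real.log α| + |Real.log B| with hΓdef
  clear_value Γ
  have hΓnonneg : 0 ≤ Γ := by rw [hΓdef]; positivity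
  obtain ⟨N₂, hN₂⟩ := exists_nat_gt (Γ / η)
  refine ⟨max (max N₁ 1) N₂, fun n hn x hx => ?_⟩
  have hn1 : 1 ≤ n := le_trans (le_trans (le_max_right N₁ 1) (le_max_left _ N₂)) hn
  have hnN₁ : N₁ ≤ n := le_trans (le_trans (le_max_left N₁ 1) (le_max_left _ N₂)) hn
  have hnN₂ : N₂ ≤ n := le_trans (le_max_right _ N₂) hn
  have hnpos : (0 : ℝ) < n := by exact_mod_cast hn1
  have hxne' : x ≠ 0 := hxne x hx
  have hnne : (n : ℂ) ≠ 0 := Nat.cast_ne_zero.mpr (by omega)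
  have hSl : δ / 2 ≤ Complex.abs (S n x) := hSlb n hn1 hnN₁ x hx
  have hSu : Complex.abs (S n x) ≤ B := hSub n hn1 x hx
  have hSne : S n x ≠ 0 := by
    intro h0
    rw [h0] at hSl
    simp at hSl
    linarith
  have hpnx := hfact n hn1 x hx
  have hfne : (n.factorial : ℂ) ≠ 0 := Nat.cast_ne_zero.mpr n.factorial_ne_zero
  have hwne : ((n : ℂ) * x) ≠ 0 := mul_ne_zero hnne hxne'
  constructor
  · rw [hpnx]
    exact mul_ne_zero (div_ne_zero (pow_ne_zero _ hwne) hfne) hSne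
  -- compute the absolute value
  have hstb := stirling_bounds n hn1
  have hstpos : 0 < Stirling.stirlingSeq n :=
    lt_of_lt_of_le (Real.sqrt_pos.mpr Real.pi_pos) hstb.1
  have hA : Complex.abs ((Real.sqrt (2 * Real.pi * n) : ℂ) * p n ((n : ℂ) * x) /
        (Complex.exp 1 * x) ^ n)
      = (Real.sqrt Real.pi / Stirling.stirlingSeq n) * Complex.abs (S n x) := by
    rw [hpnx]
    simp only [map_div₀, map_mul, map_pow, Complex.abs_ofReal, Complex.abs_natCast,
      Complex.abs_exp, Complex.one_re]
    rw [abs_of_nonneg (Real.sqrt_nonneg _)]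
    exact stirling_scalar n hn1 (Complex.abs x) (Complex.abs (S n x)) (hxpos x hx)
  rw [Complex.norm_eq_abs, hA]
  -- bounds on A
  set A : ℝ := (Real.sqrt Real.pi / Stirling.stirlingSeq n) * Complex.abs (S n x) with hAdef
  clear_value A
  have hAl : α ≤ A := by
    rw [hAdef, hαdef, hγdef]
    have h1 : Real.sqrt Real.pi / (Real.exp 1 / Real.sqrt 2)
        ≤ Real.sqrt Real.pi / Stirling.stirlingSeq n := by
      refine div_le_div_of_nonneg_left (Real.sqrt_nonneg _) hstpos hstb.2
    refine mul_le_mul h1 hSl (by positivity) (by positivity)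
  have hAu : A ≤ B := by
    rw [hAdef]
    have h1 : Real.sqrt Real.pi / Stirling.stirlingSeq n ≤ 1 := by
      rw [div_le_one hstpos]
      exact hstb.1
    calc (Real.sqrt Real.pi / Stirling.stirlingSeq n) * Complex.abs (S n x)
        ≤ 1 * B := mul_le_mul h1 hSu (Complex.abs.nonneg _) zero_le_one
      _ = B := one_mul B
  have hApos : 0 < A := lt_of_lt_of_le hαpos hAl
  have hlogbound : |Real.log A| ≤ Γ := by
    rw [hΓdef]
    have h1 : Real.log A ≤ Real.log B := Real.log_le_log hApos hAu
    have h2 : Real.log α ≤ Real.log A := Real.log_le_log hαpos hAl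
    rw [abs_le]
    have h3 : 0 ≤ |Real.log B| := abs_nonneg _
    have h4 : 0 ≤ |Real.log α| := abs_nonneg _
    constructor
    · have := neg_abs_le (Real.log α)
      linarith
    · have := le_abs_self (Real.log B)
      linarith
  rw [abs_mul]
  have h1n : |(1 / n : ℝ)| = 1 / n := abs_of_nonneg (by positivity)
  rw [h1n]
  have hfin : (1 / n : ℝ) * |Real.log A| ≤ Γ / n := by
    rw [div_eq_mul_one_div Γ]
    calc (1 / n : ℝ) * |Real.log A| ≤ (1 / n : ℝ) * Γ := by
          refine mul_le_mul_of_nonneg_left hlogbound (by positivity)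
      _ = Γ * (1 / n) := by ring
  refine lt_of_le_of_lt hfin ?_
  rw [div_lt_iff₀ hnpos]
  have hN₂η : Γ < N₂ * η := by
    rw [div_lt_iff₀ hη] at hN₂
    exact hN₂
  have : (N₂ : ℝ) ≤ n := by exact_mod_cast hnN₂
  nlinarith
end
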